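/- arXiv:1402.1582 — 4 statements merged into one kernel-verified Lean document; each statement's English description precedes it below -/
import Mathlib

section
/- Let γ ∈ ℝ with |γ| > 1 and let 𝒜 = {a, a+1, …, A} ⊂ ℤ with a ≤ 0 ≤ A and A − a > |γ| − 1. Let 𝓘_{γ,𝒜} be the set of all real numbers of the form ∑_{i=0}^∞ D_i γ^{−i} with all D_i ∈ 𝒜. Then 𝓘_{γ,𝒜} = [ aγ/(γ−1), Aγ/(γ−1) ] if γ > 1, and 𝓘_{γ,𝒜} = [ (A + aγ)·γ/(γ²−1), (Aγ + a)·γ/(γ²−1) ] if γ < −1. -/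
/-- The set `𝓘_{γ,𝒜}` of real numbers having a `(γ,𝒜)`-representation
`w = ∑_{i=0}^∞ D_i / γ^i` with digits `D_i ∈ {a,…,A}`. -/
def repInterval (γ : ℝ) (a A : ℤ) : Set ℝ :=
  {w | ∃ D : ℕ → ℤ, (∀ i, a ≤ D i ∧ D i ≤ A) ∧ w = ∑' i : ℕ, (D i : ℝ) / γ ^ i}

lemma aux_inv_lt (γ : ℝ) (hγ : 1 < |γ|) : ‖γ⁻¹‖ < 1 := by
  rw [Real.norm_eq_abs, abs_inv]; exact inv_lt_one_of_one_lt₀ hγ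

lemma aux_ne (γ : ℝ) (hγ : 1 < |γ|) : γ ≠ 0 ∧ γ - 1 ≠ 0 ∧ γ + 1 ≠ 0 := by
  constructor
  · intro h0; rw [h0] at hγ; simp at hγ; linarith
  constructor
  · intro h0
    have : γ = 1 := by linarith
    rw [this] at hγ; simp at hγ
  · intro h0
    have : γ = -1 := by linarith
    rw [this] at hγ; simp at hγ

lemma aux_summable (γ : ℝ) (hγ : 1 < |γ|) (f : ℕ → ℝ) (C : ℝ)
    (hf : ∀ i, |f i| ≤ C) : Summable (fun i => f i / γ ^ i) := by
  have hinv : ‖(|γ|)⁻¹‖ < 1 := by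
    rw [Real.norm_eq_abs, abs_inv, abs_abs]; exact inv_lt_one_of_one_lt₀ hγ
  have hγ0 : (0:ℝ) < |γ| := lt_trans one_pos hγ
  refine Summable.of_norm_bounded (g := fun i => C * (|γ|)⁻¹ ^ i)
    ((summable_geometric_of_norm_lt_one hinv).mul_left C) ?_
  intro i
  simp only [Real.norm_eq_abs, abs_div, abs_pow, inv_pow]
  rw [div_eq_mul_inv]
  have h1 : (0:ℝ) < (|γ| ^ i)⁻¹ := by positivity
  exact mul_le_mul_of_nonneg_right (hf i) (le_of_lt h1)

lemma digit_abs_le (a A d : ℤ) (h1 : a ≤ d) (h2 : d ≤ A) :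
    |((d : ℤ) : ℝ)| ≤ max |(a:ℝ)| |(A:ℝ)| := by
  have h1' : (a:ℝ) ≤ (d:ℝ) := by exact_mod_cast h1
  have h2' : (d:ℝ) ≤ (A:ℝ) := by exact_mod_cast h2
  refine abs_le.mpr ⟨?_, ?_⟩
  · calc -(max |(a:ℝ)| |(A:ℝ)|) ≤ -|(a:ℝ)| := by simp [le_max_left]
      _ ≤ (a:ℝ) := neg_abs_le _
      _ ≤ _ := h1'
  · exact h2'.trans ((le_abs_self _).trans (le_max_right _ _))

lemma tsum_const_div (γ c : ℝ) (hγ : 1 < |γ|) :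
    ∑' i : ℕ, c / γ ^ i = c * γ / (γ - 1) := by
  have hinv := aux_inv_lt γ hγ
  obtain ⟨hγ0, hγ1, hγ2⟩ := aux_ne γ hγ
  have h : ∀ i : ℕ, c / γ ^ i = c * (γ⁻¹) ^ i := by
    intro i; rw [inv_pow, div_eq_mul_inv]
  rw [tsum_congr h, tsum_mul_left, tsum_geometric_of_norm_lt_one hinv]
  have h1 : 1 - γ⁻¹ ≠ 0 := by
    intro h; have hh : γ⁻¹ = 1 := by linarith
    have : γ = 1 := by field_simp at hh; linarith
    exact hγ1 (by rw [this]; ring)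
  field_simp

lemma tsum_alt_div (γ u v : ℝ) (hγ : 1 < |γ|) :
    ∑' i : ℕ, (if Even i then u else v) / γ ^ i = (u * γ + v) * γ / (γ ^ 2 - 1) := by
  have hinv := aux_inv_lt γ hγ
  have hinv2 : ‖-γ⁻¹‖ < 1 := by rwa [norm_neg]
  obtain ⟨hγ0, hγ1, hγ2⟩ := aux_ne γ hγ
  set c := (u + v) / 2
  set d := (u - v) / 2
  have h : ∀ i : ℕ, (if Even i then u else v) / γ ^ i
      = c * (γ⁻¹) ^ i + d * (-γ⁻¹) ^ i := by
    intro i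
    rcases Nat.even_or_odd i with he | ho
    · rw [if_pos he, he.neg_pow, inv_pow, div_eq_mul_inv]
      simp only [c, d]; ring_nf
    · rw [if_neg (Nat.not_even_iff_odd.mpr ho), ho.neg_pow, inv_pow, div_eq_mul_inv]
      simp only [c, d]; ring_nf
  rw [tsum_congr h,
    Summable.tsum_add ((summable_geometric_of_norm_lt_one hinv).mul_left c)
      ((summable_geometric_of_norm_lt_one hinv2).mul_left d),
    tsum_mul_left, tsum_mul_left, tsum_geometric_of_norm_lt_one hinv,
    tsum_geometric_of_norm_lt_one hinv2]
  have h1 : 1 - γ⁻¹ ≠ 0 := by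
    intro h; have hh : γ⁻¹ = 1 := by linarith
    have : γ = 1 := by field_simp at hh; linarith
    exact hγ1 (by rw [this]; ring)
  have h2 : 1 - -γ⁻¹ ≠ 0 := by
    intro h; have hh : γ⁻¹ = -1 := by linarith
    have : γ = -1 := by field_simp at hh; linarith
    exact hγ2 (by rw [this]; ring)
  have h3 : γ ^ 2 - 1 ≠ 0 := by
    intro h
    have : (γ - 1) * (γ + 1) = 0 := by ring_nf; linarith [h]
    rcases mul_eq_zero.mp this with h' | h' <;> [exact hγ1 h'; exact hγ2 h']
  simp only [c, d]
  have e1 : (1 - γ⁻¹)⁻¹ = γ / (γ - 1) := by field_simp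
  have e2 : (1 - -γ⁻¹)⁻¹ = γ / (γ + 1) := by rw [sub_neg_eq_add]; field_simp
  rw [e1, e2, eq_div_iff h3]
  field_simp
  ring

lemma exists_digit (a A : ℤ) (haA : a ≤ A) (L U : ℝ) (hU : (a:ℝ) ≤ U)
    (hL : L ≤ (A:ℝ)) (hlen : 1 < U - L) :
    ∃ d : ℤ, a ≤ d ∧ d ≤ A ∧ L ≤ (d:ℝ) ∧ (d:ℝ) ≤ U := by
  by_cases h : L ≤ (a:ℝ)
  · exact ⟨a, le_refl _, haA, h, hU⟩
  · push_neg at h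
    refine ⟨⌈L⌉, ?_, ?_, Int.le_ceil L, ?_⟩
    · exact_mod_cast le_of_lt (lt_of_lt_of_le h (Int.le_ceil L))
    · exact_mod_cast Int.ceil_le.2 hL
    · linarith [Int.ceil_lt_add_one L]

lemma mem_repInterval_of_step (γ : ℝ) (a A : ℤ) (m M : ℝ) (hγ : 1 < |γ|)
    (H : ∀ w ∈ Set.Icc m M, ∃ d : ℤ, a ≤ d ∧ d ≤ A ∧ γ * (w - d) ∈ Set.Icc m M) :
    ∀ w ∈ Set.Icc m M, w ∈ repInterval γ a A := by
  intro w hw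
  have hγ0 : γ ≠ 0 := by
    intro h0; rw [h0] at hγ; simp at hγ; linarith
  have H' : ∀ x : {x : ℝ // x ∈ Set.Icc m M}, ∃ p : ℤ × {y : ℝ // y ∈ Set.Icc m M},
      a ≤ p.1 ∧ p.1 ≤ A ∧ (p.2 : ℝ) = γ * ((x : ℝ) - p.1) := by
    intro x
    obtain ⟨d, h1, h2, h3⟩ := H x x.2
    exact ⟨⟨d, ⟨γ * ((x : ℝ) - d), h3⟩⟩, h1, h2, rfl⟩
  choose F hF1 hF2 hF3 using H'
  let seq : ℕ → {x : ℝ // x ∈ Set.Icc m M} :=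
    fun n => Nat.rec ⟨w, hw⟩ (fun _ x => (F x).2) n
  let D : ℕ → ℤ := fun n => (F (seq n)).1
  have hseq : ∀ n, (seq (n+1)).1 = γ * ((seq n).1 - (D n : ℝ)) := fun n => hF3 (seq n)
  have key : ∀ n, ∑ i ∈ Finset.range n, (D i : ℝ) / γ ^ i = w - (seq n).1 / γ ^ n := by
    intro n; induction n with
    | zero => simp [seq]
    | succ n ih =>
      rw [Finset.sum_range_succ, ih, hseq n, pow_succ]
      have hpn : γ ^ n ≠ 0 := pow_ne_zero n hγ0
      field_simp
      ring
  refine ⟨D, fun i => ⟨hF1 _, hF2 _⟩, ?_⟩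
  have hC : ∀ i, |((D i : ℤ) : ℝ)| ≤ max |(a:ℝ)| |(A:ℝ)| :=
    fun i => digit_abs_le a A (D i) (hF1 _) (hF2 _)
  have hsum : Summable (fun i => ((D i : ℤ) : ℝ) / γ ^ i) :=
    aux_summable γ hγ _ _ hC
  have hbound : ∀ n, ‖(seq n).1 / γ ^ n‖ ≤ max |m| |M| * |γ⁻¹| ^ n := by
    intro n
    rw [Real.norm_eq_abs, abs_div, abs_pow, div_eq_mul_inv, ← inv_pow, abs_inv]
    refine mul_le_mul_of_nonneg_right ?_ (by positivity)
    obtain ⟨hl, hr⟩ := (seq n).2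
    refine abs_le.mpr ⟨?_, ?_⟩
    · calc -(max |m| |M|) ≤ -|m| := by simp [le_max_left]
        _ ≤ m := neg_abs_le _
        _ ≤ _ := hl
    · exact hr.trans ((le_abs_self _).trans (le_max_right _ _))
  have htend0 : Filter.Tendsto (fun n => (seq n).1 / γ ^ n) Filter.atTop (nhds 0) := by
    have hinv : |γ⁻¹| < 1 := by rw [abs_inv]; exact inv_lt_one_of_one_lt₀ hγ
    have hg : Filter.Tendsto (fun n : ℕ => max |m| |M| * |γ⁻¹| ^ n) Filter.atTop (nhds 0) := by
      have := (tendsto_pow_atTop_nhds_zero_of_lt_one (abs_nonneg _) hinv).const_mul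
        (max |m| |M|)
      simpa using this
    exact squeeze_zero_norm hbound hg
  have htend : Filter.Tendsto (fun n => ∑ i ∈ Finset.range n, ((D i : ℤ) : ℝ) / γ ^ i)
      Filter.atTop (nhds w) := by
    simp only [key]
    simpa using tendsto_const_nhds.sub htend0
  exact tendsto_nhds_unique htend hsum.hasSum.tendsto_sum_nat

/-- For `|γ| > 1` and an alphabet `𝒜 = {a,…,A}` with `a ≤ 0 ≤ A` and `A - a > |γ| - 1`,
the set `𝓘_{γ,𝒜}` is the indicated closed interval. -/
theorem repInterval_eq_Icc (γ : ℝ) (a A : ℤ)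
    (hγ : 1 < |γ|) (ha : a ≤ 0) (hA : 0 ≤ A)
    (hsize : (A : ℝ) - (a : ℝ) > |γ| - 1) :
    (1 < γ → repInterval γ a A =
      Set.Icc ((a : ℝ) * γ / (γ - 1)) ((A : ℝ) * γ / (γ - 1))) ∧
    (γ < -1 → repInterval γ a A =
      Set.Icc (((A : ℝ) + (a : ℝ) * γ) * γ / (γ ^ 2 - 1))
              (((A : ℝ) * γ + (a : ℝ)) * γ / (γ ^ 2 - 1))) := by
  obtain ⟨hγ0, hγ1, hγ2⟩ := aux_ne γ hγ
  have haA : a ≤ A := le_trans ha hA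
  have haA' : (a:ℝ) ≤ (A:ℝ) := by exact_mod_cast haA
  constructor
  · -- case 1 < γ
    intro hpos
    have habs : |γ| = γ := abs_of_pos (lt_trans one_pos hpos)
    have hγp : (0:ℝ) < γ := lt_trans one_pos hpos
    set m := (a:ℝ) * γ / (γ - 1) with hm
    set M := (A:ℝ) * γ / (γ - 1) with hM
    ext w
    constructor
    · rintro ⟨D, hD, rfl⟩
      have hsumD : Summable (fun i => (D i : ℝ) / γ ^ i) :=
        aux_summable γ hγ _ _ (fun i => digit_abs_le a A (D i) (hD i).1 (hD i).2)
      have hsa : Summable (fun i => (a:ℝ) / γ ^ i) :=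
        aux_summable γ hγ _ |(a:ℝ)| (fun i => le_refl _)
      have hsA : Summable (fun i => (A:ℝ) / γ ^ i) :=
        aux_summable γ hγ _ |(A:ℝ)| (fun i => le_refl _)
      have hgpow : ∀ i : ℕ, (0:ℝ) < γ ^ i := fun i => pow_pos hγp i
      constructor
      · rw [hm, ← tsum_const_div γ (a:ℝ) hγ]
        refine Summable.tsum_le_tsum (fun i => ?_) hsa hsumD
        exact (div_le_div_iff_of_pos_right (hgpow i)).mpr (by exact_mod_cast (hD i).1)
      · rw [hM, ← tsum_const_div γ (A:ℝ) hγ]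
        refine Summable.tsum_le_tsum (fun i => ?_) hsumD hsA
        exact (div_le_div_iff_of_pos_right (hgpow i)).mpr (by exact_mod_cast (hD i).2)
    · intro hw
      refine mem_repInterval_of_step γ a A m M hγ ?_ w hw
      intro x hx
      obtain ⟨hx1, hx2⟩ := hx
      have e1 : m / γ = m - (a:ℝ) := by rw [hm]; field_simp; ring
      have e2 : M / γ = M - (A:ℝ) := by rw [hM]; field_simp; ring
      have e4 : M / γ - m / γ = ((A:ℝ) - a) / (γ - 1) := by
        rw [hm, hM]; field_simp
      have hlen' : 1 < ((A:ℝ) - a) / (γ - 1) :=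
        (one_lt_div (by linarith)).mpr (by rw [habs] at hsize; linarith)
      obtain ⟨d, h1, h2, h3, h4⟩ := exists_digit a A haA (x - M / γ) (x - m / γ)
        (by linarith) (by linarith) (by linarith)
      refine ⟨d, h1, h2, ?_, ?_⟩
      · have h5 : m / γ ≤ x - d := by linarith
        calc m = γ * (m / γ) := by field_simp
          _ ≤ γ * (x - d) := mul_le_mul_of_nonneg_left h5 (le_of_lt hγp)
      · have h5 : x - d ≤ M / γ := by linarith
        calc γ * (x - d) ≤ γ * (M / γ) := mul_le_mul_of_nonneg_left h5 (le_of_lt hγp)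
          _ = M := by field_simp
  · -- case γ < -1
    intro hneg
    have habs : |γ| = -γ := abs_of_neg (by linarith)
    have hγn : γ < 0 := by linarith
    have h3 : γ ^ 2 - 1 ≠ 0 := by
      intro h
      have : (γ - 1) * (γ + 1) = 0 := by ring_nf; linarith [h]
      rcases mul_eq_zero.mp this with h' | h' <;> [exact hγ1 h'; exact hγ2 h']
    set m := ((A:ℝ) + (a:ℝ) * γ) * γ / (γ ^ 2 - 1) with hm
    set M := ((A:ℝ) * γ + (a:ℝ)) * γ / (γ ^ 2 - 1) with hM
    ext w
    constructor
    · rintro ⟨D, hD, rfl⟩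
      have hsumD : Summable (fun i => (D i : ℝ) / γ ^ i) :=
        aux_summable γ hγ _ _ (fun i => digit_abs_le a A (D i) (hD i).1 (hD i).2)
      have hif : ∀ (u v : ℝ), Summable (fun i => (if Even i then u else v) / γ ^ i) := by
        intro u v
        refine aux_summable γ hγ _ (max |u| |v|) (fun i => ?_)
        by_cases h : Even i <;> simp [h, le_max_left, le_max_right]
      have hterm_lo : ∀ i : ℕ, (if Even i then (a:ℝ) else (A:ℝ)) / γ ^ i ≤ (D i : ℝ) / γ ^ i := by
        intro i
        rcases Nat.even_or_odd i with he | ho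
        · rw [if_pos he]
          have hp : (0:ℝ) < γ ^ i := he.pow_pos hγ0
          exact (div_le_div_iff_of_pos_right hp).mpr (by exact_mod_cast (hD i).1)
        · rw [if_neg (Nat.not_even_iff_odd.mpr ho)]
          have hp : γ ^ i < 0 := ho.pow_neg hγn
          exact (div_le_div_right_of_neg hp).mpr (by exact_mod_cast (hD i).2)
      have hterm_hi : ∀ i : ℕ, (D i : ℝ) / γ ^ i ≤ (if Even i then (A:ℝ) else (a:ℝ)) / γ ^ i := by
        intro i
        rcases Nat.even_or_odd i with he | ho
        · rw [if_pos he]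
          have hp : (0:ℝ) < γ ^ i := he.pow_pos hγ0
          exact (div_le_div_iff_of_pos_right hp).mpr (by exact_mod_cast (hD i).2)
        · rw [if_neg (Nat.not_even_iff_odd.mpr ho)]
          have hp : γ ^ i < 0 := ho.pow_neg hγn
          exact (div_le_div_right_of_neg hp).mpr (by exact_mod_cast (hD i).1)
      constructor
      · have : m = ∑' i : ℕ, (if Even i then (a:ℝ) else (A:ℝ)) / γ ^ i := by
          rw [tsum_alt_div γ (a:ℝ) (A:ℝ) hγ, hm]; ring
        rw [this]
        exact Summable.tsum_le_tsum hterm_lo (hif _ _) hsumD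
      · have : M = ∑' i : ℕ, (if Even i then (A:ℝ) else (a:ℝ)) / γ ^ i := by
          rw [tsum_alt_div γ (A:ℝ) (a:ℝ) hγ, hM]
        rw [this]
        exact Summable.tsum_le_tsum hterm_hi hsumD (hif _ _)
    · intro hw
      refine mem_repInterval_of_step γ a A m M hγ ?_ w hw
      intro x hx
      obtain ⟨hx1, hx2⟩ := hx
      have e1 : M / γ = m - (a:ℝ) := by rw [hm, hM]; field_simp; ring
      have e2 : m / γ = M - (A:ℝ) := by rw [hm, hM]; field_simp; ring
      have hne : -γ - 1 ≠ 0 := fun h => hγ2 (by linarith)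
      have e4 : m / γ - M / γ = ((A:ℝ) - a) / (-γ - 1) := by
        rw [hm, hM]; field_simp; ring
      have hlen' : 1 < ((A:ℝ) - a) / (-γ - 1) :=
        (one_lt_div (by linarith)).mpr (by rw [habs] at hsize; linarith)
      obtain ⟨d, h1, h2, h3, h4⟩ := exists_digit a A haA (x - m / γ) (x - M / γ)
        (by linarith) (by linarith) (by linarith)
      refine ⟨d, h1, h2, ?_, ?_⟩
      · have h5 : x - d ≤ m / γ := by linarith
        calc m = γ * (m / γ) := by field_simp
          _ ≤ γ * (x - d) := mul_le_mul_of_nonpos_left h5 (le_of_lt hγn)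
      · have h5 : M / γ ≤ x - d := by linarith
        calc γ * (x - d) ≤ γ * (M / γ) := mul_le_mul_of_nonpos_left h5 (le_of_lt hγn)
          _ = M := by field_simp
end

section
/- Let β > 1 be the root of x² − px + 1 with integer p ≥ 3, let m ∈ ℕ with m ≥ ⌊β⌋ = p − 1, and let Ω = [ 0, mβ/(β − 1) ). Set 𝒮 = { z ∈ ℤ + ℤβ : 0 < z < m and z′ ∈ Ω }. Then 𝒮 is finite, and for every z > 0 with z ∈ Σ_β(Ω) and z ∉ X^m(β) there exist j ∈ ℕ and s ∈ 𝒮 such that z = m ∑_{i=0}^{j−1} β^i + s β^j. -/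
set_option linter.unusedSectionVars false
set_option maxHeartbeats 1000000

/-- The spectrum `X^m(β)`: sums `∑_{j=0}^n a_j β^j` with digits `a_j ∈ {0,1,…,m}`. -/
def Xspec (β : ℝ) (m : ℕ) : Set ℝ :=
  {x | ∃ (n : ℕ) (c : ℕ → ℕ), (∀ j ≤ n, c j ≤ m) ∧
    x = ∑ j ∈ Finset.range (n + 1), (c j : ℝ) * β ^ j}

/-- The cut-and-project set `Σ_β(Ω) = { x ∈ ℤ + ℤβ : x′ ∈ Ω }`, where `x′ = a + bβ′`
for `x = a + bβ`. -/
def sigmaCP (β β' : ℝ) (Ω : Set ℝ) : Set ℝ :=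
  {x | ∃ a b : ℤ, x = (a : ℝ) + (b : ℝ) * β ∧ (a : ℝ) + (b : ℝ) * β' ∈ Ω}

namespace CPaux

lemma Xspec_digit (β : ℝ) (m d : ℕ) (hd : d ≤ m) : (d : ℝ) ∈ Xspec β m :=
  ⟨0, fun _ => d, fun _ _ => hd, by simp⟩

lemma Xspec_step (β : ℝ) (m d : ℕ) (hd : d ≤ m) {x : ℝ} (hx : x ∈ Xspec β m) :
    (d : ℝ) + β * x ∈ Xspec β m := by
  obtain ⟨n, c, hc, rfl⟩ := hx
  refine ⟨n + 1, fun j => if j = 0 then d else c (j - 1), ?_, ?_⟩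
  · rintro (_ | j) hj
    · simpa using hd
    · simpa using hc j (by omega)
  · conv_rhs => rw [Finset.sum_range_succ']
    simp only [Nat.succ_ne_zero, reduceIte, Nat.add_sub_cancel, pow_zero, mul_one]
    rw [Finset.mul_sum, add_comm]
    congr 1
    exact Finset.sum_congr rfl fun j _ => by ring

lemma step1 (β : ℝ) (p : ℤ) (heq : β ^ 2 = p * β - 1) (a b d : ℤ) :
    β * ((((a - d) * p + b : ℤ) : ℝ) + ((d - a : ℤ) : ℝ) * β)
      = ((a : ℝ) + (b : ℝ) * β) - (d : ℝ) := by
  push_cast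
  linear_combination ((d : ℝ) - (a : ℝ)) * heq

lemma step2 (β : ℝ) (p : ℤ) (heq : β ^ 2 = p * β - 1) (a b d : ℤ) :
    (((a - d) * p + b : ℤ) : ℝ) + ((d - a : ℤ) : ℝ) * ((p : ℝ) - β) =
      (((a : ℝ) + (b : ℝ) * ((p : ℝ) - β)) - (d : ℝ)) * β := by
  push_cast
  linear_combination (b : ℝ) * heq

end CPaux

/-- Auxiliary: elements of the cut-and-project set in `(0, C]`. -/
def Sz (β : ℝ) (p : ℤ) (m : ℕ) (C : ℝ) : Set ℝ :=
  {w | w ∈ sigmaCP β ((p : ℝ) - β) (Set.Ico (0 : ℝ) ((m : ℝ) * β / (β - 1))) ∧ 0 < w ∧ w ≤ C}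

namespace CPaux

section

variable {β : ℝ} {p : ℤ} {m : ℕ}
variable (hβ : 1 < β) (hp : 3 ≤ p) (heq : β ^ 2 = p * β - 1) (hm : ⌊β⌋ ≤ (m : ℤ))

include hβ hp heq

lemma hβp : β < (p : ℝ) := by nlinarith

lemma hpβ : (p : ℝ) - 1 < β := by nlinarith

include hm

lemma hmp : (p : ℤ) - 1 ≤ (m : ℤ) := by
  have hfl : ⌊β⌋ = p - 1 := by
    rw [Int.floor_eq_iff]
    push_cast
    exact ⟨by linarith [hpβ hβ hp heq], by linarith [hβp hβ hp heq]⟩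
  omega

lemma hmR : (p : ℝ) - 1 ≤ (m : ℝ) := by exact_mod_cast hmp hβ hp heq hm

lemma hWpos : 0 < (m : ℝ) * β / (β - 1) := by
  have h1 := hmR hβ hp heq hm
  have hp3 : (3 : ℝ) ≤ (p : ℤ) := by exact_mod_cast hp
  push_cast at hp3
  apply div_pos (by nlinarith) (by linarith)

lemma hWeq : ((m : ℝ) * β / (β - 1)) * (β - 1) = (m : ℝ) * β :=
  div_mul_cancel₀ _ (by intro h; rw [sub_eq_zero] at h; exact absurd h.symm (ne_of_lt hβ))

/-- `β` is below the window bound `W`. -/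
lemma hβW : β < (m : ℝ) * β / (β - 1) := by
  have h1 := hmR hβ hp heq hm
  have hp3 : (3 : ℝ) ≤ (p : ℤ) := by exact_mod_cast hp
  push_cast at hp3
  have hW := hWeq (β := β) (p := p) (m := m) hβ hp heq hm
  nlinarith [hβp hβ hp heq]

lemma Sz_finite (C : ℝ) : (Sz β p m C).Finite := by
  set W : ℝ := (m : ℝ) * β / (β - 1) with hWdef
  have hp3 : (3 : ℝ) ≤ (p : ℤ) := by exact_mod_cast hp
  push_cast at hp3
  have hW0 : 0 < W := hWpos hβ hp heq hm
  have h2βp : 1 < 2 * β - (p : ℝ) := by nlinarith [hpβ hβ hp heq]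
  have hsub : Sz β p m C ⊆
      (fun q : ℤ × ℤ => (q.1 : ℝ) + (q.2 : ℝ) * β) ''
        (Set.Icc ⌈-C * β⌉ ⌊C + W * β⌋ ×ˢ Set.Icc ⌈-W⌉ ⌊C⌋) := by
    rintro w ⟨⟨a, b, rfl, hwin⟩, h0, hC⟩
    obtain ⟨hw0, hwW⟩ := hwin
    have hbs : (b : ℝ) * (2 * β - p) = ((a : ℝ) + b * β) - ((a : ℝ) + b * ((p : ℝ) - β)) := by
      ring
    have hbC : (b : ℝ) ≤ C := by
      rcases le_or_gt (b : ℝ) 0 with h | h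
      · linarith
      · nlinarith
    have hbW : -W ≤ (b : ℝ) := by
      rcases le_or_gt 0 (b : ℝ) with h | h
      · linarith
      · nlinarith
    have haC : -C * β ≤ (a : ℝ) := by nlinarith
    have haW : (a : ℝ) ≤ C + W * β := by nlinarith
    exact ⟨(a, b), ⟨⟨Int.ceil_le.mpr haC, Int.le_floor.mpr haW⟩,
      ⟨Int.ceil_le.mpr hbW, Int.le_floor.mpr hbC⟩⟩, rfl⟩
  exact Set.Finite.subset (Set.Finite.image _ ((Set.finite_Icc _ _).prod (Set.finite_Icc _ _))) hsub

lemma Sz_card_lt {z z₁ : ℝ}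
    (hz : z ∈ sigmaCP β ((p : ℝ) - β) (Set.Ico (0 : ℝ) ((m : ℝ) * β / (β - 1))))
    (h0 : 0 < z) (h1 : z₁ < z) : (Sz β p m z₁).ncard < (Sz β p m z).ncard := by
  have hsubset : Sz β p m z₁ ⊆ Sz β p m z := by
    rintro w ⟨hw, h0w, hle⟩
    exact ⟨hw, h0w, hle.trans h1.le⟩
  refine Set.ncard_lt_ncard ?_ (Sz_finite hβ hp heq hm z)
  rw [Set.ssubset_iff_of_subset hsubset]
  exact ⟨z, ⟨hz, h0, le_refl z⟩, fun hc => absurd hc.2.2 (not_le.mpr h1)⟩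

/-- Key lemma L : if `z = a + bβ > 0` and `z' ∈ [0, β)` then `z ∈ X^m(β)`. -/
lemma lemL : ∀ n : ℕ, ∀ a b : ℤ, (Sz β p m ((a : ℝ) + (b : ℝ) * β)).ncard ≤ n →
    0 < (a : ℝ) + (b : ℝ) * β → 0 ≤ (a : ℝ) + (b : ℝ) * ((p : ℝ) - β) →
    (a : ℝ) + (b : ℝ) * ((p : ℝ) - β) < β → ((a : ℝ) + (b : ℝ) * β) ∈ Xspec β m := by
  have hp3 : (3 : ℝ) ≤ (p : ℤ) := by exact_mod_cast hp
  push_cast at hp3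
  have hβltp := hβp hβ hp heq
  have hβgt := hpβ hβ hp heq
  have hβW' := hβW hβ hp heq hm
  have hmpz := hmp hβ hp heq hm
  intro n
  induction n with
  | zero =>
    intro a b hcard h0 h0' hβ'
    exfalso
    have hmem : ((a : ℝ) + (b : ℝ) * β) ∈ Sz β p m ((a : ℝ) + (b : ℝ) * β) :=
      ⟨⟨a, b, rfl, ⟨h0', by linarith⟩⟩, h0, le_refl _⟩
    have := (Set.ncard_pos (Sz_finite hβ hp heq hm _)).mpr ⟨_, hmem⟩
    omega
  | succ n ih =>
    intro a b hcard h0 h0' hβ'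
    -- first: b ≥ 0
    have hb0 : 0 ≤ b := by
      by_contra hbneg
      push_neg at hbneg
      rcases eq_or_lt_of_le (by omega : b ≤ -1) with hb1 | hb2
      · -- b = -1 : then p - 1 < a < p, impossible
        have hb : (b : ℝ) = -1 := by exact_mod_cast hb1
        rw [hb] at h0 hβ'
        have ha1 : (p : ℝ) - 1 < (a : ℝ) := by linarith
        have ha2 : (a : ℝ) < (p : ℝ) := by linarith
        have h1 : (p : ℤ) - 1 < a := by exact_mod_cast ha1
        have h2 : a < p := by exact_mod_cast ha2
        omega
      · -- b ≤ -2
        have hb : (b : ℝ) ≤ -2 := by exact_mod_cast (show b ≤ -2 by omega)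
        have h2 : (1 : ℝ) ≤ 2 * β - p := by linarith
        have h3 : (2 : ℝ) * (2 * β - p) ≤ (-(b : ℝ)) * (2 * β - p) :=
          mul_le_mul_of_nonneg_right (by linarith) (by linarith)
        have h4 : β ≤ 2 * (2 * β - (p : ℝ)) := by linarith
        have h5 : (b : ℝ) * (2 * β - p) = -((-(b : ℝ)) * (2 * β - p)) := by ring
        have hid : (a : ℝ) + (b : ℝ) * β
            = ((a : ℝ) + (b : ℝ) * ((p : ℝ) - β)) + (b : ℝ) * (2 * β - p) := by ring
        linarith
    -- hence z ≥ z'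
    have hb0R : (0 : ℝ) ≤ (b : ℝ) := by exact_mod_cast hb0
    have hzz' : (a : ℝ) + (b : ℝ) * ((p : ℝ) - β) ≤ (a : ℝ) + (b : ℝ) * β := by nlinarith
    set z : ℝ := (a : ℝ) + (b : ℝ) * β with hzdef
    set z' : ℝ := (a : ℝ) + (b : ℝ) * ((p : ℝ) - β) with hz'def
    set d : ℤ := ⌊z'⌋ with hddef
    have hd0 : 0 ≤ d := Int.le_floor.mpr (by simpa using h0')
    have hd0R : (0 : ℝ) ≤ (d : ℝ) := by exact_mod_cast hd0
    have hdz' : (d : ℝ) ≤ z' := Int.floor_le z'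
    have hz'd : z' < (d : ℝ) + 1 := Int.lt_floor_add_one z'
    have hdp : d ≤ p - 1 := by
      have h1 : (d : ℝ) < (p : ℝ) := by linarith
      have h2 : d < p := by exact_mod_cast h1
      omega
    have hdm : d ≤ (m : ℤ) := by omega
    have hdnm : d.toNat ≤ m := Int.toNat_le.mpr hdm
    have hdn : ((d.toNat : ℕ) : ℝ) = (d : ℝ) := by exact_mod_cast Int.toNat_of_nonneg hd0
    rcases eq_or_lt_of_le (le_trans hdz' hzz' : (d : ℝ) ≤ z) with hzd | hzd
    · rw [← hzd, ← hdn]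
      exact Xspec_digit β m d.toNat hdnm
    · -- one greedy step
      set a₁ : ℤ := (a - d) * p + b with ha₁
      set b₁ : ℤ := d - a with hb₁
      set z₁ : ℝ := (a₁ : ℝ) + (b₁ : ℝ) * β with hz₁def
      have hstep1 : β * z₁ = z - (d : ℝ) := step1 β p heq a b d
      have hstep2 : (a₁ : ℝ) + (b₁ : ℝ) * ((p : ℝ) - β) = (z' - (d : ℝ)) * β :=
        step2 β p heq a b d
      have hz₁pos : 0 < z₁ := by nlinarith [hstep1, hzd]
      have hz₁0' : 0 ≤ (a₁ : ℝ) + (b₁ : ℝ) * ((p : ℝ) - β) := by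
        rw [hstep2]
        have : (0 : ℝ) ≤ z' - d := by linarith
        nlinarith
      have hz₁β : (a₁ : ℝ) + (b₁ : ℝ) * ((p : ℝ) - β) < β := by
        rw [hstep2]
        nlinarith [hz'd]
      have hz₁lt : z₁ < z := by
        nlinarith [mul_pos (show (0 : ℝ) < β - 1 by linarith) h0, hstep1]
      have hzmem : z ∈ sigmaCP β ((p : ℝ) - β) (Set.Ico (0 : ℝ) ((m : ℝ) * β / (β - 1))) :=
        ⟨a, b, rfl, ⟨h0', by linarith⟩⟩
      have hcard' : (Sz β p m z₁).ncard ≤ n := by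
        have := Sz_card_lt hβ hp heq hm hzmem h0 hz₁lt
        omega
      have hX := ih a₁ b₁ hcard' hz₁pos hz₁0' hz₁β
      have hzw : z = ((d.toNat : ℕ) : ℝ) + β * z₁ := by rw [hdn]; linarith
      rw [hzw]
      exact Xspec_step β m d.toNat hdnm hX

/-- Main structural induction. -/
lemma main_aux : ∀ n : ℕ, ∀ a b : ℤ, (Sz β p m ((a : ℝ) + (b : ℝ) * β)).ncard ≤ n →
    0 < (a : ℝ) + (b : ℝ) * β → 0 ≤ (a : ℝ) + (b : ℝ) * ((p : ℝ) - β) →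
    (a : ℝ) + (b : ℝ) * ((p : ℝ) - β) < (m : ℝ) * β / (β - 1) →
    ((a : ℝ) + (b : ℝ) * β) ∈ Xspec β m ∨
      ∃ (j : ℕ) (s : ℝ),
        (s ∈ sigmaCP β ((p : ℝ) - β) (Set.Ico (0 : ℝ) ((m : ℝ) * β / (β - 1))) ∧
          0 < s ∧ s < (m : ℝ)) ∧
        ((a : ℝ) + (b : ℝ) * β) = (m : ℝ) * ∑ i ∈ Finset.range j, β ^ i + s * β ^ j := by
  have hp3 : (3 : ℝ) ≤ (p : ℤ) := by exact_mod_cast hp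
  push_cast at hp3
  have hβltp := hβp hβ hp heq
  have hβgt := hpβ hβ hp heq
  have hβW' := hβW hβ hp heq hm
  have hmR' := hmR hβ hp heq hm
  have hW := hWeq (β := β) (p := p) (m := m) hβ hp heq hm
  have hW0 := hWpos hβ hp heq hm
  intro n
  induction n with
  | zero =>
    intro a b hcard h0 h0' hWlt
    exfalso
    have hmem : ((a : ℝ) + (b : ℝ) * β) ∈ Sz β p m ((a : ℝ) + (b : ℝ) * β) :=
      ⟨⟨a, b, rfl, ⟨h0', hWlt⟩⟩, h0, le_refl _⟩
    have := (Set.ncard_pos (Sz_finite hβ hp heq hm _)).mpr ⟨_, hmem⟩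
    omega
  | succ n ih =>
    intro a b hcard h0 h0' hWlt
    set z : ℝ := (a : ℝ) + (b : ℝ) * β with hzdef
    set z' : ℝ := (a : ℝ) + (b : ℝ) * ((p : ℝ) - β) with hz'def
    have hzmem : z ∈ sigmaCP β ((p : ℝ) - β) (Set.Ico (0 : ℝ) ((m : ℝ) * β / (β - 1))) :=
      ⟨a, b, rfl, ⟨h0', hWlt⟩⟩
    rcases lt_or_ge z (m : ℝ) with hzm | hzm
    · -- z < m : it is itself in S
      right
      exact ⟨0, z, ⟨hzmem, h0, hzm⟩, by simp⟩
    rcases lt_or_ge z' (m : ℝ) with hz'm | hz'm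
    · -- z' < m : greedy digit d = ⌊z'⌋ < m, then lemma L
      left
      set d : ℤ := ⌊z'⌋ with hddef
      have hd0 : 0 ≤ d := Int.le_floor.mpr (by simpa using h0')
      have hd0R : (0 : ℝ) ≤ (d : ℝ) := by exact_mod_cast hd0
      have hdz' : (d : ℝ) ≤ z' := Int.floor_le z'
      have hz'd : z' < (d : ℝ) + 1 := Int.lt_floor_add_one z'
      have hdm : d < (m : ℤ) := by exact_mod_cast (show (d : ℝ) < (m : ℝ) by linarith)
      have hdnm : d.toNat ≤ m := Int.toNat_le.mpr hdm.le
      have hdn : ((d.toNat : ℕ) : ℝ) = (d : ℝ) := by exact_mod_cast Int.toNat_of_nonneg hd0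
      set a₁ : ℤ := (a - d) * p + b with ha₁
      set b₁ : ℤ := d - a with hb₁
      set z₁ : ℝ := (a₁ : ℝ) + (b₁ : ℝ) * β with hz₁def
      have hstep1 : β * z₁ = z - (d : ℝ) := step1 β p heq a b d
      have hstep2 : (a₁ : ℝ) + (b₁ : ℝ) * ((p : ℝ) - β) = (z' - (d : ℝ)) * β :=
        step2 β p heq a b d
      have hdltz : (d : ℝ) < z := by linarith
      have hz₁pos : 0 < z₁ := by nlinarith [hstep1, hdltz]
      have hz₁0' : 0 ≤ (a₁ : ℝ) + (b₁ : ℝ) * ((p : ℝ) - β) := by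
        rw [hstep2]
        nlinarith [hdz']
      have hz₁β : (a₁ : ℝ) + (b₁ : ℝ) * ((p : ℝ) - β) < β := by
        rw [hstep2]
        nlinarith [hz'd]
      have hX := lemL hβ hp heq hm (Sz β p m z₁).ncard a₁ b₁ le_rfl hz₁pos hz₁0' hz₁β
      have hzw : z = ((d.toNat : ℕ) : ℝ) + β * z₁ := by rw [hdn]; linarith
      rw [hzw]
      exact Xspec_step β m d.toNat hdnm hX
    · -- z ≥ m and z' ≥ m : subtract digit m
      set a₁ : ℤ := (a - (m : ℤ)) * p + b with ha₁
      set b₁ : ℤ := (m : ℤ) - a with hb₁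
      set z₁ : ℝ := (a₁ : ℝ) + (b₁ : ℝ) * β with hz₁def
      have hstep1 : β * z₁ = z - ((m : ℤ) : ℝ) := step1 β p heq a b (m : ℤ)
      have hstep2 : (a₁ : ℝ) + (b₁ : ℝ) * ((p : ℝ) - β) = (z' - ((m : ℤ) : ℝ)) * β :=
        step2 β p heq a b (m : ℤ)
      rw [Int.cast_natCast] at hstep1 hstep2
      have hz₁0 : 0 ≤ z₁ := by nlinarith [hstep1]
      have hz₁0' : 0 ≤ (a₁ : ℝ) + (b₁ : ℝ) * ((p : ℝ) - β) := by
        rw [hstep2]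
        nlinarith [hz'm]
      have hz₁W : (a₁ : ℝ) + (b₁ : ℝ) * ((p : ℝ) - β) < (m : ℝ) * β / (β - 1) := by
        rw [hstep2]
        have hmul : z' * β < ((m : ℝ) * β / (β - 1)) * β :=
          mul_lt_mul_of_pos_right hWlt (by linarith)
        have hexp : (z' - (m : ℝ)) * β = z' * β - (m : ℝ) * β := by ring
        have hWexp : ((m : ℝ) * β / (β - 1)) * (β - 1)
            = ((m : ℝ) * β / (β - 1)) * β - ((m : ℝ) * β / (β - 1)) := by ring
        rw [hexp]
        linarith [hW, hmul]
      rcases eq_or_lt_of_le hz₁0 with hz₁z | hz₁pos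
      · -- z₁ = 0, so z = m
        left
        have hzm' : z = ((m : ℕ) : ℝ) := by
          have h1 : β * z₁ = 0 := by rw [← hz₁z]; ring
          push_cast
          linarith [hstep1]
        rw [hzm']
        exact Xspec_digit β m m le_rfl
      · have hz₁lt : z₁ < z := by
          nlinarith [mul_pos (show (0 : ℝ) < β - 1 by linarith) h0, hstep1]
        have hcard' : (Sz β p m z₁).ncard ≤ n := by
          have := Sz_card_lt hβ hp heq hm hzmem h0 hz₁lt
          omega
        rcases ih a₁ b₁ hcard' hz₁pos hz₁0' hz₁W with hX | ⟨j, s, hs, hz₁eq⟩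
        · left
          have hzw : z = ((m : ℕ) : ℝ) + β * z₁ := by push_cast; linarith
          rw [hzw]
          exact Xspec_step β m m le_rfl hX
        · right
          refine ⟨j + 1, s, hs, ?_⟩
          have hzeq : z = (m : ℝ) + β * z₁ := by linarith
          have hsum : ∑ i ∈ Finset.range (j + 1), β ^ i
              = (∑ i ∈ Finset.range j, β ^ i) * β + 1 := by
            rw [Finset.sum_range_succ']
            simp only [pow_zero]
            rw [Finset.sum_mul]
            simp [pow_succ]
          rw [hzeq, hz₁def, hz₁eq, hsum]
          ring

end

end CPaux

/-- Lemma (case `β² = pβ - 1`, `p ≥ 3`, `m ≥ ⌊β⌋`): with `Ω = [0, mβ/(β-1))` and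
`𝒮 = { z ∈ Σ_β(Ω) : 0 < z < m }`, the set `𝒮` is finite and every positive
`z ∈ Σ_β(Ω) \ X^m(β)` has the form `z = m ∑_{i<j} β^i + s β^j` with `s ∈ 𝒮`. -/
theorem cutProject_minus_spectrum_structure_minus (β : ℝ) (p : ℤ)
    (hβ : 1 < β) (hp : 3 ≤ p) (heq : β ^ 2 = p * β - 1)
    (m : ℕ) (hm : ⌊β⌋ ≤ (m : ℤ)) :
    {z : ℝ | z ∈ sigmaCP β ((p : ℝ) - β) (Set.Ico (0 : ℝ) ((m : ℝ) * β / (β - 1))) ∧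
        0 < z ∧ z < (m : ℝ)}.Finite ∧
    ∀ z : ℝ, 0 < z →
      z ∈ sigmaCP β ((p : ℝ) - β) (Set.Ico (0 : ℝ) ((m : ℝ) * β / (β - 1))) →
      z ∉ Xspec β m →
      ∃ (j : ℕ) (s : ℝ),
        (s ∈ sigmaCP β ((p : ℝ) - β) (Set.Ico (0 : ℝ) ((m : ℝ) * β / (β - 1))) ∧
          0 < s ∧ s < (m : ℝ)) ∧
        z = (m : ℝ) * ∑ i ∈ Finset.range j, β ^ i + s * β ^ j := by
  constructor
  · refine Set.Finite.subset (CPaux.Sz_finite hβ hp heq hm (m : ℝ)) ?_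
    rintro w ⟨hw, h0, hlt⟩
    exact ⟨hw, h0, hlt.le⟩
  · intro z hz0 hzS hzX
    obtain ⟨a, b, hzab, hwin⟩ := hzS
    obtain ⟨hw0, hwW⟩ := hwin
    subst hzab
    rcases CPaux.main_aux hβ hp heq hm (Sz β p m ((a : ℝ) + (b : ℝ) * β)).ncard a b le_rfl
        hz0 hw0 hwW with hX | h
    · exact absurd hX hzX
    · exact h
end

section
/- Let β > 1 be the root of x² − px − 1 with integer p ≥ 1, let m ∈ ℕ with m > ⌊β⌋ = p, and let Ω = ( −mβ/(β² − 1), mβ²/(β² − 1) ). Set 𝒮 = { z ∈ ℤ + ℤβ : 0 < z < m and z′ ∈ Ω }. Then 𝒮 is finite, and for every z > 0 with z ∈ Σ_β(Ω) and z ∉ X^m(β) there exist j ∈ ℕ and s ∈ 𝒮 such that z = m ∑_{i=0}^{j−1} β^{2i} + s β^{2j} or z = m ∑_{i=0}^{j−1} β^{2i+1} + s β^{2j+1}. -/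
set_option maxHeartbeats 1000000

lemma Xspec_zero (β : ℝ) (m : ℕ) : (0:ℝ) ∈ Xspec β m :=
  ⟨0, fun _ => 0, fun _ _ => Nat.zero_le m, by simp⟩

lemma Xspec_digit {β : ℝ} {m : ℕ} {c : ℕ} (hc : c ≤ m) {w : ℝ} (hw : w ∈ Xspec β m) :
    (c:ℝ) + β * w ∈ Xspec β m := by
  obtain ⟨n, d, hd, rfl⟩ := hw
  refine ⟨n + 1, fun j => if j = 0 then c else d (j - 1), ?_, ?_⟩
  · intro j hj
    by_cases h : j = 0
    · simp [h, hc]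
    · simp only [if_neg h]; exact hd _ (by omega)
  · rw [Finset.sum_range_succ' (fun j => ((if j = 0 then c else d (j - 1) : ℕ) : ℝ) * β ^ j) (n+1)]
    simp only [if_pos rfl, Nat.add_sub_cancel, if_neg (Nat.succ_ne_zero _), pow_zero, mul_one]
    rw [Finset.mul_sum, add_comm]
    congr 1
    apply Finset.sum_congr rfl
    intro i _
    rw [pow_succ]
    ring

lemma Xspec_digit' {β : ℝ} {m : ℕ} {c : ℤ} (h0 : 0 ≤ c) (hc : c ≤ (m:ℤ)) {w : ℝ}
    (hw : w ∈ Xspec β m) : (c:ℝ) + β * w ∈ Xspec β m := by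
  lift c to ℕ using h0
  exact_mod_cast Xspec_digit (by exact_mod_cast hc) hw

lemma Xspec_int {β : ℝ} {m : ℕ} {c : ℤ} (h0 : 0 ≤ c) (hc : c ≤ (m:ℤ)) :
    (c:ℝ) ∈ Xspec β m := by
  have := Xspec_digit' h0 hc (Xspec_zero β m)
  simpa using this

lemma norm_int_ne {p : ℤ} (hp : 1 ≤ p) (a b : ℤ) (h : a^2 + a*b*p - b^2 = 0) :
    a = 0 ∧ b = 0 := by
  by_cases hb : b = 0
  · subst hb
    refine ⟨by nlinarith, rfl⟩
  · exfalso
    have key : (2*a + b*p)^2 = b^2 * (p^2 + 4) := by nlinarith [h]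
    have hdvd : b ∣ (2*a + b*p) := by
      rw [← Int.pow_dvd_pow_iff (two_ne_zero)]
      exact ⟨p^2 + 4, key⟩
    obtain ⟨e, he⟩ := hdvd
    have he2 : e^2 = p^2 + 4 := by
      have hb2 : b^2 ≠ 0 := pow_ne_zero _ hb
      have : b^2 * e^2 = b^2 * (p^2+4) := by rw [← key, he]; ring
      exact mul_left_cancel₀ hb2 this
    set E := e.natAbs with hE
    set P := p.natAbs with hP
    have hEe : ((E:ℕ):ℤ)^2 = e^2 := by rw [hE, ← Int.abs_eq_natAbs, sq_abs]
    have hPp : ((P:ℕ):ℤ) = p := Int.natAbs_of_nonneg (by omega)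
    have hnat : E^2 = P^2 + 4 := by
      have : ((E:ℕ):ℤ)^2 = ((P:ℕ):ℤ)^2 + 4 := by rw [hEe, he2, hPp]
      exact_mod_cast this
    have hP1 : 1 ≤ P := by
      have : (1:ℤ) ≤ (P:ℤ) := by rw [hPp]; exact hp
      exact_mod_cast this
    have h2 : P < E := by
      by_contra hcon
      push_neg at hcon
      have : E^2 ≤ P^2 := Nat.pow_le_pow_left hcon 2
      omega
    have h3 : E < P + 2 := by
      by_contra hcon
      push_neg at hcon
      have h4 : (P+2)^2 ≤ E^2 := Nat.pow_le_pow_left hcon 2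
      have h5 : (P+2)^2 = P^2 + 4*P + 4 := by ring
      have h6 : P^2 + 4*P + 4 ≤ P^2 + 4 := by rw [← h5, ← hnat] at *; omega
      have : 4*P ≤ 0 := by linarith [h6]
      omega
    have hEP : E = P + 1 := by omega
    rw [hEP] at hnat
    have h7 : (P+1)^2 = P^2 + 2*P + 1 := by ring
    have h8 : 2*P + 1 = 4 := by linarith [hnat, h7]
    omega

lemma val_lb {β : ℝ} {p : ℤ} (hβ : 1 < β) (heq : β^2 = p*β+1) (hp : 1 ≤ p)
    (a b : ℤ) (hz : 0 < (a:ℝ) + b*β) {C : ℝ} (hC : |(a:ℝ) + b*((p:ℝ)-β)| ≤ C) :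
    1 ≤ ((a:ℝ) + b*β) * C := by
  set N : ℤ := a^2 + a*b*p - b^2 with hN
  have hid : ((a:ℝ) + b*β) * ((a:ℝ) + b*((p:ℝ)-β)) = (N:ℝ) := by
    push_cast [hN]
    linear_combination (-(b:ℝ)^2) * heq
  have hN0 : N ≠ 0 := by
    intro h0
    obtain ⟨ha, hb⟩ := norm_int_ne hp a b (by rw [← hN]; exact h0)
    rw [ha, hb] at hz
    norm_num at hz
  have h1 : (1:ℝ) ≤ |(N:ℝ)| := by
    have := Int.one_le_abs hN0
    exact_mod_cast this
  calc (1:ℝ) ≤ |(N:ℝ)| := h1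
    _ = |((a:ℝ) + b*β) * ((a:ℝ) + b*((p:ℝ)-β))| := by rw [hid]
    _ = ((a:ℝ) + b*β) * |(a:ℝ) + b*((p:ℝ)-β)| := by
        rw [abs_mul, abs_of_pos hz]
    _ ≤ ((a:ℝ) + b*β) * C := by
        exact mul_le_mul_of_nonneg_left hC hz.le

lemma L0 {β : ℝ} {p : ℤ} {m : ℕ} (hβ : 1 < β) (heq : β^2 = p*β+1) (hp : 1 ≤ p)
    (hm : (p:ℝ) + 1 ≤ m) (n : ℕ) :
    ∀ a b : ℤ, ∀ z zb : ℝ, z = (a:ℝ) + b*β → zb = (a:ℝ) + b*((p:ℝ)-β) →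
      0 ≤ z →
      -(1 + (β-(p:ℝ))^2) ≤ zb →
      zb ≤ β + (β-(p:ℝ)) →
      ⌊((β + (β-(p:ℝ))) / (1 - (β-(p:ℝ)))) * z⌋₊ ≤ n →
      z ∈ Xspec β m := by
  induction n using Nat.strong_induction_on with
  | _ n IH =>
  intro a b z zb hz_def hzb_def hz0 hc1 hc2 hn
  set u : ℝ := β - (p:ℝ) with hu_def
  clear_value u
  have hu1 : β * u = 1 := by rw [hu_def]; linear_combination heq
  have hu0 : 0 < u := by nlinarith
  have hul : u < 1 := by nlinarith
  have hβ0 : (0:ℝ) < β := by linarith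
  by_cases hz : z = 0
  · rw [hz]; exact Xspec_zero β m
  have hzpos : 0 < z := lt_of_le_of_ne hz0 (Ne.symm hz)
  set σ : ℝ := 1 + u^2 with hσ_def
  clear_value σ
  set τ : ℝ := β + u with hτ_def
  clear_value τ
  have hστ : σ ≤ τ := by nlinarith
  have hτ1 : 1 < τ := by nlinarith
  have hβm : β < (m:ℝ) := by nlinarith
  set x : ℝ := zb - σ*u with hx_def
  clear_value x
  set k : ℤ := ⌈x⌉ with hk_def
  clear_value k
  set c : ℤ := max 0 k with hc_def
  clear_value c
  have hc0 : (0:ℤ) ≤ c := by rw [hc_def]; exact le_max_left _ _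
  have hc0' : (0:ℝ) ≤ (c:ℝ) := by exact_mod_cast hc0
  have hkm : k ≤ (m:ℤ) := by
    rw [hk_def, Int.ceil_le]
    push_cast
    nlinarith
  have hcm : c ≤ (m:ℤ) := by rw [hc_def]; exact max_le (Int.natCast_nonneg m) hkm
  -- window bounds for the new conjugate
  have hwin : -σ ≤ β*((c:ℝ) - zb) ∧ β*((c:ℝ) - zb) ≤ τ := by
    rcases le_or_gt k 0 with hk0 | hk1
    · have hcc : (c:ℝ) = 0 := by
        rw [hc_def, max_eq_left hk0]; norm_num
      have hx0 : x ≤ 0 := by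
        rw [hk_def] at hk0
        have h' : x ≤ ((0:ℤ):ℝ) := Int.ceil_le.mp hk0
        simpa using h'
      rw [hcc]
      constructor
      · nlinarith
      · nlinarith
    · have hcc : (c:ℝ) = (k:ℝ) := by rw [hc_def, max_eq_right hk1.le]
      have hxk : x ≤ (k:ℝ) := by rw [hk_def]; exact Int.le_ceil x
      have hkx : (k:ℝ) < x + 1 := by rw [hk_def]; exact Int.ceil_lt_add_one x
      rw [hcc]
      constructor
      · nlinarith
      · nlinarith
  -- c ≤ z
  have hcz : (c:ℝ) ≤ z := by
    have hdz : z - zb = (b:ℝ) * (β + u) := by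
      rw [hz_def, hzb_def, hu_def]; ring
    rcases lt_trichotomy b 0 with hb | hb | hb
    · exfalso
      have hb1 : (b:ℝ) ≤ -1 := by
        have : b ≤ -1 := by omega
        exact_mod_cast this
      nlinarith
    · have hba : (b:ℝ) = 0 := by exact_mod_cast hb
      have hza : z = zb := by rw [hz_def, hzb_def, hb]; push_cast; ring
      have hza' : z = (a:ℝ) := by rw [hz_def, hb]; push_cast; ring
      have ha1 : (1:ℤ) ≤ a := by
        have : (0:ℝ) < (a:ℝ) := hza' ▸ hzpos
        exact_mod_cast this
      have hka : k ≤ a := by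
        rw [hk_def, Int.ceil_le]
        rw [hx_def, ← hza, hza']
        nlinarith
      have : c ≤ a := by rw [hc_def]; exact max_le (by linarith) hka
      rw [hza']
      exact_mod_cast this
    · have hb1 : (1:ℝ) ≤ (b:ℝ) := by exact_mod_cast hb
      rcases le_or_gt k 0 with hk0 | hk1
      · have hcc : (c:ℝ) = 0 := by rw [hc_def, max_eq_left hk0]; norm_num
        rw [hcc]; linarith
      · have hcc : (c:ℝ) = (k:ℝ) := by rw [hc_def, max_eq_right hk1.le]
        have hkx : (k:ℝ) < x + 1 := by rw [hk_def]; exact Int.ceil_lt_add_one x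
        rw [hcc]
        nlinarith
  -- new pair
  set a' : ℤ := b - (a - c)*p with ha'_def
  clear_value a'
  set b' : ℤ := a - c with hb'_def
  clear_value b'
  set w : ℝ := (z - c)*u with hw_def
  clear_value w
  have hw_val : (a':ℝ) + b'*β = w := by
    rw [ha'_def, hb'_def, hw_def, hz_def, hu_def]
    push_cast
    linear_combination (-(b:ℝ)) * heq
  have hw_conj : (a':ℝ) + b'*((p:ℝ)-β) = β*((c:ℝ) - zb) := by
    rw [ha'_def, hb'_def, hzb_def]
    push_cast
    linear_combination (-(b:ℝ)) * heq
  have hw0 : 0 ≤ w := by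
    rw [hw_def]
    have h1 : 0 ≤ z - c := by linarith
    exact mul_nonneg h1 hu0.le
  have hwzu : w ≤ z * u := by
    rw [hw_def]
    nlinarith
  by_cases hwz : w = 0
  · have hzc : z = (c:ℝ) := by
      have h2 : (z - (c:ℝ)) * u = 0 := by rw [← hw_def]; exact hwz
      rcases mul_eq_zero.mp h2 with h | h
      · linarith
      · exact absurd h (ne_of_gt hu0)
    rw [hzc]
    exact Xspec_int hc0 hcm
  · have hwpos : 0 < w := lt_of_le_of_ne hw0 (Ne.symm hwz)
    set K : ℝ := τ / (1 - u) with hK_def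
    clear_value K
    have hK0 : 0 < K := by
      rw [hK_def]
      apply div_pos (by linarith) (by linarith)
    have hzb_abs : |zb| ≤ τ := abs_le.mpr ⟨by nlinarith, hc2⟩
    have h1z : 1 ≤ z * τ := by
      have := val_lb hβ heq hp a b (hz_def ▸ hzpos) (hzb_def ▸ hzb_abs)
      rw [← hz_def] at this
      exact this
    have hne : (1:ℝ) - u ≠ 0 := by linarith
    have hKu : K * (1 - u) = τ := by
      rw [hK_def]
      exact div_mul_cancel₀ τ hne
    have hKdec : K * w ≤ K * z - 1 := by
      have h2 : K * w ≤ K * (z * u) := mul_le_mul_of_nonneg_left hwzu hK0.le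
      nlinarith
    have hflo : ⌊K * w⌋₊ < ⌊K * z⌋₊ := by
      have hfw : (⌊K * w⌋₊:ℝ) ≤ K * w := Nat.floor_le (mul_nonneg hK0.le hw0)
      have hfz : K * z < (⌊K * z⌋₊:ℝ) + 1 := Nat.lt_floor_add_one _
      have : (⌊K * w⌋₊:ℝ) < (⌊K * z⌋₊:ℝ) := by linarith
      exact Nat.cast_lt.mp this
    have hwX : w ∈ Xspec β m := by
      apply IH ⌊K * w⌋₊ (lt_of_lt_of_le hflo hn) a' b' w (β*((c:ℝ) - zb))
        hw_val.symm hw_conj.symm hw0 hwin.1 hwin.2 le_rfl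
    have hzcw : z = (c:ℝ) + β * w := by
      rw [hw_def]
      have h3 : β * ((z - c)*u) = (z - c) * (β * u) := by ring
      rw [h3, hu1]
      ring
    rw [hzcw]
    exact Xspec_digit' hc0 hcm hwX

lemma step_val {β : ℝ} {p : ℤ} (heq : β^2 = p*β+1) (a b c : ℤ) (z : ℝ)
    (hz : z = (a:ℝ) + b*β) :
    ((b - (a-c)*p : ℤ):ℝ) + ((a-c:ℤ):ℝ)*β = (z - c)*(β-(p:ℝ)) := by
  rw [hz]; push_cast; linear_combination (-(b:ℝ)) * heq

lemma step_conj {β : ℝ} {p : ℤ} (heq : β^2 = p*β+1) (a b c : ℤ) (zb : ℝ)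
    (hzb : zb = (a:ℝ) + b*((p:ℝ)-β)) :
    ((b - (a-c)*p : ℤ):ℝ) + ((a-c:ℤ):ℝ)*((p:ℝ)-β) = β*((c:ℝ) - zb) := by
  rw [hzb]; push_cast; linear_combination (-(b:ℝ)) * heq

/-- one-step safe lemma for `z ≥ m`. -/
lemma L1 {β : ℝ} {p : ℤ} {m : ℕ} (hβ : 1 < β) (heq : β^2 = p*β+1) (hp : 1 ≤ p)
    (hm : (p:ℝ) + 1 ≤ m) (a b : ℤ) (z zb : ℝ)
    (hz_def : z = (a:ℝ) + b*β) (hzb_def : zb = (a:ℝ) + b*((p:ℝ)-β))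
    (hzm : (m:ℝ) ≤ z)
    (hc1 : -(1 + (β-(p:ℝ))^2) ≤ zb)
    (hc2 : zb ≤ (m:ℝ) + (1 + (β-(p:ℝ))^2)*(β-(p:ℝ))) :
    z ∈ Xspec β m := by
  set u : ℝ := β - (p:ℝ) with hu_def
  clear_value u
  have hu1 : β * u = 1 := by rw [hu_def]; linear_combination heq
  have hu0 : 0 < u := by nlinarith
  have hul : u < 1 := by nlinarith
  have hβ0 : (0:ℝ) < β := by linarith
  set σ : ℝ := 1 + u^2 with hσ_def
  clear_value σ
  have hσ0 : 0 < σ := by nlinarith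
  set τ : ℝ := β + u with hτ_def
  clear_value τ
  set x : ℝ := zb - σ*u with hx_def
  clear_value x
  set k : ℤ := ⌈x⌉ with hk_def
  clear_value k
  set c : ℤ := max 0 k with hc_def
  clear_value c
  have hc0 : (0:ℤ) ≤ c := by rw [hc_def]; exact le_max_left _ _
  have hc0' : (0:ℝ) ≤ (c:ℝ) := by exact_mod_cast hc0
  have hkm : k ≤ (m:ℤ) := by
    rw [hk_def, Int.ceil_le]
    push_cast
    nlinarith
  have hcm : c ≤ (m:ℤ) := by rw [hc_def]; exact max_le (Int.natCast_nonneg m) hkm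
  have hcm' : (c:ℝ) ≤ (m:ℝ) := by exact_mod_cast hcm
  have hcz : (c:ℝ) ≤ z := le_trans hcm' hzm
  have hwin : -σ ≤ β*((c:ℝ) - zb) ∧ β*((c:ℝ) - zb) ≤ τ := by
    rcases le_or_gt k 0 with hk0 | hk1
    · have hcc : (c:ℝ) = 0 := by
        rw [hc_def, max_eq_left hk0]; norm_num
      rw [hk_def] at hk0
      have hx0 : x ≤ 0 := by
        have h' : x ≤ ((0:ℤ):ℝ) := Int.ceil_le.mp hk0
        simpa using h'
      rw [hcc]
      constructor
      · nlinarith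
      · nlinarith
    · have hcc : (c:ℝ) = (k:ℝ) := by rw [hc_def, max_eq_right hk1.le]
      have hxk : x ≤ (k:ℝ) := by rw [hk_def]; exact Int.le_ceil x
      have hkx : (k:ℝ) < x + 1 := by rw [hk_def]; exact Int.ceil_lt_add_one x
      rw [hcc]
      constructor
      · nlinarith
      · nlinarith
  set w : ℝ := (z - c)*u with hw_def
  have hw0 : 0 ≤ w := by
    rw [hw_def]
    have h1 : 0 ≤ z - c := by linarith
    exact mul_nonneg h1 hu0.le
  have hw_val : ((b - (a-c)*p : ℤ):ℝ) + ((a-c:ℤ):ℝ)*β = w := by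
    rw [hw_def, hu_def]; exact step_val heq a b c z hz_def
  have hw_conj : ((b - (a-c)*p : ℤ):ℝ) + ((a-c:ℤ):ℝ)*((p:ℝ)-β) = β*((c:ℝ) - zb) :=
    step_conj heq a b c zb hzb_def
  have hwX : w ∈ Xspec β m := by
    apply L0 hβ heq hp hm ⌊((β + (β-(p:ℝ))) / (1 - (β-(p:ℝ)))) * w⌋₊ (b - (a-c)*p) (a-c)
      w (β*((c:ℝ) - zb)) hw_val.symm hw_conj.symm hw0 ?_ ?_ le_rfl
    · rw [← hu_def, ← hσ_def]; exact hwin.1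
    · rw [← hu_def, ← hτ_def]; exact hwin.2
  have hzcw : z = (c:ℝ) + β * w := by
    rw [hw_def]
    have h3 : β * ((z - c)*u) = (z - c) * (β * u) := by ring
    rw [h3, hu1]
    ring
  rw [hzcw]
  exact Xspec_digit' hc0 hcm hwX

/-- The set `𝒮` as a predicate. -/
def Sprop (β : ℝ) (p : ℤ) (m : ℕ) (s : ℝ) : Prop :=
  (s ∈ sigmaCP β ((p : ℝ) - β)
      (Set.Ioo (-((m : ℝ) * β) / (β ^ 2 - 1)) ((m : ℝ) * β ^ 2 / (β ^ 2 - 1)))) ∧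
    0 < s ∧ s < (m : ℝ)

def EvenForm (β : ℝ) (p : ℤ) (m : ℕ) (z : ℝ) : Prop :=
  ∃ (j : ℕ) (s : ℝ), Sprop β p m s ∧
    z = (m : ℝ) * ∑ i ∈ Finset.range j, β ^ (2 * i) + s * β ^ (2 * j)

def OddForm (β : ℝ) (p : ℤ) (m : ℕ) (z : ℝ) : Prop :=
  ∃ (j : ℕ) (s : ℝ), Sprop β p m s ∧
    z = (m : ℝ) * ∑ i ∈ Finset.range j, β ^ (2 * i + 1) + s * β ^ (2 * j + 1)

lemma sum_odd_shift (β : ℝ) (j : ℕ) :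
    β * ∑ i ∈ Finset.range j, β ^ (2 * i) = ∑ i ∈ Finset.range j, β ^ (2 * i + 1) := by
  rw [Finset.mul_sum]
  exact Finset.sum_congr rfl fun i _ => by rw [pow_succ]; ring

lemma sum_even_succ (β : ℝ) (j : ℕ) :
    ∑ i ∈ Finset.range (j+1), β ^ (2 * i) =
      1 + β * ∑ i ∈ Finset.range j, β ^ (2 * i + 1) := by
  rw [Finset.sum_range_succ' (fun i => β ^ (2 * i)) j, Finset.mul_sum]
  simp only [mul_zero, pow_zero]
  rw [add_comm]
  congr 1
  exact Finset.sum_congr rfl fun i _ => by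
    rw [show 2 * (i + 1) = (2 * i + 1) + 1 by ring, pow_succ]; ring

lemma mainInd {β : ℝ} {p : ℤ} {m : ℕ} (hβ : 1 < β) (heq : β^2 = p*β+1) (hp : 1 ≤ p)
    (hm : (p:ℝ) + 1 ≤ m) (n : ℕ) :
    ∀ a b : ℤ, ∀ z zb : ℝ, z = (a:ℝ) + b*β → zb = (a:ℝ) + b*((p:ℝ)-β) →
      (m:ℝ) ≤ z →
      -((m:ℝ)*β) < zb*(β^2-1) → zb*(β^2-1) < (m:ℝ)*β^2 →
      z ∉ Xspec β m →
      ⌊((m:ℝ)*β^2/(β^2-1) / (1 - (β-(p:ℝ)))) * z⌋₊ ≤ n →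
      ((m:ℝ) + (1 + (β-(p:ℝ))^2)*(β-(p:ℝ)) < zb ∧ EvenForm β p m z) ∨
        (zb < -(1 + (β-(p:ℝ))^2) ∧ OddForm β p m z) := by
  induction n using Nat.strong_induction_on with
  | _ n IH =>
  intro a b z zb hz_def hzb_def hzm hΩ1 hΩ2 hzX hn
  set u : ℝ := β - (p:ℝ) with hu_def
  clear_value u
  have hu1 : β * u = 1 := by rw [hu_def]; linear_combination heq
  have hu0 : 0 < u := by nlinarith
  have hul : u < 1 := by nlinarith
  have hβ0 : (0:ℝ) < β := by linarith
  have hD : 0 < β^2 - 1 := by nlinarith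
  have hp1 : (1:ℝ) ≤ (p:ℝ) := by exact_mod_cast hp
  have hm2 : (2:ℝ) ≤ (m:ℝ) := by linarith
  have hzpos : 0 < z := by linarith
  set σ : ℝ := 1 + u^2 with hσ_def
  clear_value σ
  have hσ0 : 0 < σ := by nlinarith
  set T : ℝ := (m:ℝ)*β^2/(β^2-1) with hT_def
  clear_value T
  have hTD : T * (β^2-1) = (m:ℝ)*β^2 := by
    rw [hT_def]; exact div_mul_cancel₀ _ (ne_of_gt hD)
  have hT0 : 0 < T := by nlinarith
  have hzbT : |zb| ≤ T := by
    rw [abs_le]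
    constructor
    · by_contra hcon
      push_neg at hcon
      have h1 : 0 < (-T - zb) * (β^2-1) := mul_pos (by linarith) hD
      nlinarith [mul_le_mul_of_nonneg_left hβ.le (by positivity : (0:ℝ) ≤ (m:ℝ)*β)]
    · by_contra hcon
      push_neg at hcon
      have h1 : 0 < (zb - T) * (β^2-1) := mul_pos (by linarith) hD
      nlinarith
  have h1z : 1 ≤ z * T := by
    have := val_lb hβ heq hp a b (hz_def ▸ hzpos) (hzb_def ▸ hzbT)
    rw [← hz_def] at this
    exact this
  set K : ℝ := T / (1 - u) with hK_def
  clear_value K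
  have hK0 : 0 < K := by rw [hK_def]; exact div_pos hT0 (by linarith)
  have hKu : K * (1 - u) = T := by rw [hK_def]; exact div_mul_cancel₀ _ (by linarith)
  -- dichotomy via L1
  have hdich : zb < -σ ∨ (m:ℝ) + σ*u < zb := by
    by_contra hcon
    push_neg at hcon
    obtain ⟨h1, h2⟩ := hcon
    apply hzX
    apply L1 hβ heq hp hm a b z zb hz_def hzb_def hzm
    · rw [← hu_def, ← hσ_def]; linarith
    · rw [← hu_def, ← hσ_def]; linarith
  -- measure decrease
  have hmeas : ∀ w : ℝ, 0 ≤ w → w ≤ z * u → ⌊K * w⌋₊ < ⌊K * z⌋₊ := by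
    intro w hw0 hwzu
    have hKdec : K * w ≤ K * z - 1 := by
      have h2 : K * w ≤ K * (z * u) := mul_le_mul_of_nonneg_left hwzu hK0.le
      nlinarith
    have hfw : (⌊K * w⌋₊:ℝ) ≤ K * w := Nat.floor_le (mul_nonneg hK0.le hw0)
    have hfz : K * z < (⌊K * z⌋₊:ℝ) + 1 := Nat.lt_floor_add_one _
    have : (⌊K * w⌋₊:ℝ) < (⌊K * z⌋₊:ℝ) := by linarith
    exact Nat.cast_lt.mp this
  rcases hdich with hlo | hhi
  · -- Odd branch : digit 0
    right
    refine ⟨hlo, ?_⟩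
    set w : ℝ := z * u with hw_def
    clear_value w
    set wb : ℝ := β * (0 - zb) with hwb_def
    clear_value wb
    have hw_val : ((b - (a-0)*p : ℤ):ℝ) + ((a-0:ℤ):ℝ)*β = w := by
      have h := step_val heq a b 0 z hz_def
      rw [hw_def, hu_def]
      push_cast at h ⊢
      linear_combination h
    have hw_conj : ((b - (a-0)*p : ℤ):ℝ) + ((a-0:ℤ):ℝ)*((p:ℝ)-β) = wb := by
      have h := step_conj heq a b 0 zb hzb_def
      rw [hwb_def]
      push_cast at h ⊢
      linear_combination h
    have hwpos : 0 < w := by rw [hw_def]; exact mul_pos hzpos hu0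
    have hβw : β * w = z := by
      rw [hw_def]
      have h : β * (z * u) = z * (β * u) := by ring
      rw [h, hu1, mul_one]
    have hwX : w ∉ Xspec β m := by
      intro hcon
      apply hzX
      rw [show z = ((0:ℤ):ℝ) + β * w by push_cast; linear_combination hβw.symm]
      exact Xspec_digit' le_rfl (Int.natCast_nonneg m) hcon
    have hwb_pos : β * σ < wb := by
      rw [hwb_def]
      nlinarith
    have hwbΩ1 : -((m:ℝ)*β) < wb*(β^2-1) := by
      have : 0 < wb := by nlinarith
      nlinarith
    have hwbΩ2 : wb*(β^2-1) < (m:ℝ)*β^2 := by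
      rw [hwb_def]
      nlinarith
    rcases lt_or_ge w (m:ℝ) with hwm | hwm
    · -- j = 0, s = w
      refine ⟨0, w, ⟨⟨b - (a-0)*p, a-0, hw_val.symm, ?_⟩, hwpos, hwm⟩, ?_⟩
      · rw [hw_conj]
        constructor
        · rw [div_lt_iff₀ hD]; exact hwbΩ1
        · rw [lt_div_iff₀ hD]; exact hwbΩ2
      · simp only [Finset.range_zero, Finset.sum_empty, mul_zero, zero_add, pow_one]
        linear_combination (-1 : ℝ) * hβw
    · have hml := hmeas w hwpos.le (by rw [hw_def])
      have hres := IH ⌊K * w⌋₊ (lt_of_lt_of_le hml hn) (b - (a-0)*p) (a-0) w wb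
        hw_val.symm hw_conj.symm hwm hwbΩ1 hwbΩ2 hwX le_rfl
      rcases hres with ⟨hwb_hi, hEv⟩ | ⟨hwb_lo, hOdd⟩
      · obtain ⟨j, s, hs, hwf⟩ := hEv
        refine ⟨j, s, hs, ?_⟩
        calc z = β * w := hβw.symm
          _ = β * ((m:ℝ) * ∑ i ∈ Finset.range j, β^(2*i) + s * β^(2*j)) := by rw [hwf]
          _ = (m:ℝ) * (β * ∑ i ∈ Finset.range j, β^(2*i)) + s * β^(2*j+1) := by
              rw [pow_succ]; ring
          _ = (m:ℝ) * ∑ i ∈ Finset.range j, β^(2*i+1) + s * β^(2*j+1) := by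
              rw [sum_odd_shift]
      · exfalso
        nlinarith
  · -- Even branch : digit m
    left
    refine ⟨hhi, ?_⟩
    set w : ℝ := (z - (m:ℝ)) * u with hw_def
    clear_value w
    set wb : ℝ := β * ((m:ℝ) - zb) with hwb_def
    clear_value wb
    have hw_val : ((b - (a-(m:ℤ))*p : ℤ):ℝ) + ((a-(m:ℤ):ℤ):ℝ)*β = w := by
      have h := step_val heq a b (m:ℤ) z hz_def
      rw [hw_def, hu_def]
      push_cast at h ⊢
      linear_combination h
    have hw_conj : ((b - (a-(m:ℤ))*p : ℤ):ℝ) + ((a-(m:ℤ):ℤ):ℝ)*((p:ℝ)-β) = wb := by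
      have h := step_conj heq a b (m:ℤ) zb hzb_def
      rw [hwb_def]
      push_cast at h ⊢
      linear_combination h
    have hw0 : 0 ≤ w := by
      rw [hw_def]
      exact mul_nonneg (by linarith) hu0.le
    have hβw : β * w = z - (m:ℝ) := by
      rw [hw_def]
      have h : β * ((z - (m:ℝ)) * u) = (z - (m:ℝ)) * (β * u) := by ring
      rw [h, hu1, mul_one]
    have hwpos : 0 < w := by
      rcases lt_or_eq_of_le hw0 with h | h
      · exact h
      · exfalso
        apply hzX
        have h0 : z - (m:ℝ) = 0 := by rw [← hβw, ← h]; ring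
        have hzm' : z = ((m:ℤ):ℝ) := by push_cast; linarith
        rw [hzm']
        exact Xspec_int (Int.natCast_nonneg m) le_rfl
    have hwX : w ∉ Xspec β m := by
      intro hcon
      apply hzX
      rw [show z = (((m:ℤ)):ℝ) + β * w by push_cast; linear_combination (-1 : ℝ) * hβw]
      exact Xspec_digit' (Int.natCast_nonneg m) le_rfl hcon
    have hwb_hi : wb < -σ := by
      rw [hwb_def]
      nlinarith
    have hwbΩ1 : -((m:ℝ)*β) < wb*(β^2-1) := by
      rw [hwb_def]
      nlinarith
    have hwbΩ2 : wb*(β^2-1) < (m:ℝ)*β^2 := by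
      have hwb0 : wb < 0 := by linarith
      have h2 : wb * (β^2-1) < 0 := mul_neg_of_neg_of_pos hwb0 hD
      have h3 : 0 < (m:ℝ)*β^2 := by positivity
      linarith
    rcases lt_or_ge w (m:ℝ) with hwm | hwm
    · -- j = 1, s = w * u
      set s : ℝ := w * u with hs_def
      clear_value s
      set a' : ℤ := b - (a-(m:ℤ))*p with ha'_def
      set b' : ℤ := a - (m:ℤ) with hb'_def
      have hs_val : ((b' - (a'-0)*p : ℤ):ℝ) + ((a'-0:ℤ):ℝ)*β = s := by
        have h := step_val heq a' b' 0 w hw_val.symm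
        rw [hs_def, hu_def]
        push_cast at h ⊢
        linear_combination h
      have hs_conj : ((b' - (a'-0)*p : ℤ):ℝ) + ((a'-0:ℤ):ℝ)*((p:ℝ)-β) = β * (0 - wb) := by
        have h := step_conj heq a' b' 0 wb hw_conj.symm
        push_cast at h ⊢
        linear_combination h
    
      have hsΩ1 : -((m:ℝ)*β) < (β * (0 - wb))*(β^2-1) := by
        have h2 : 0 < β * (0 - wb) := mul_pos hβ0 (by linarith)
        have h3 : 0 < (β * (0 - wb))*(β^2-1) := mul_pos h2 hD
        have h4 : 0 < (m:ℝ)*β := by positivity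
        linarith
      have hsΩ2 : (β * (0 - wb))*(β^2-1) < (m:ℝ)*β^2 := by
        have h6 : (β * (0 - wb))*(β^2-1) = -(β * (wb * (β^2-1))) := by ring
        have h7 : β * (-((m:ℝ)*β)) < β * (wb*(β^2-1)) := mul_lt_mul_of_pos_left hwbΩ1 hβ0
        have h8 : β * (-((m:ℝ)*β)) = -((m:ℝ)*β^2) := by ring
        rw [h6]
        linarith only [h7, h8]
      have hspos : 0 < s := by rw [hs_def]; exact mul_pos hwpos hu0
      have hsm : s < (m:ℝ) := by
        have h2 : w * u < w * 1 := mul_lt_mul_of_pos_left hul hwpos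
        rw [mul_one] at h2
        rw [hs_def]
        linarith
      refine ⟨1, s, ⟨⟨b' - (a'-0)*p, a'-0, hs_val.symm, ?_⟩, hspos, hsm⟩, ?_⟩
      · rw [hs_conj]
        constructor
        · rw [div_lt_iff₀ hD]; exact hsΩ1
        · rw [lt_div_iff₀ hD]; exact hsΩ2
      · simp only [Finset.range_one, Finset.sum_singleton, mul_zero, pow_zero, mul_one]
        have hsβ : s * β^(2*1) = β * w := by
          rw [hs_def, show (2*1 : ℕ) = 2 by rfl]
          have : w * u * β^2 = w * (β*u) * β := by ring
          rw [this, hu1]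
          ring
        rw [hsβ, hβw]
        ring
    · have hml := hmeas w hw0
        (by rw [hw_def]; exact mul_le_mul_of_nonneg_right (by linarith) hu0.le)
      have hres := IH ⌊K * w⌋₊ (lt_of_lt_of_le hml hn) (b - (a-(m:ℤ))*p) (a-(m:ℤ)) w wb
        hw_val.symm hw_conj.symm hwm hwbΩ1 hwbΩ2 hwX le_rfl
      rcases hres with ⟨hwb_hi2, hEv⟩ | ⟨hwb_lo, hOdd⟩
      · exfalso
        have h9 : 0 < σ * u := mul_pos hσ0 hu0
        linarith only [hwb_hi2, hwb_hi, h9, hσ0, hm2]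
      · obtain ⟨j, s, hs, hwf⟩ := hOdd
        refine ⟨j+1, s, hs, ?_⟩
        calc z = (m:ℝ) + β * w := by linear_combination (-1:ℝ) * hβw
          _ = (m:ℝ) + β * ((m:ℝ) * ∑ i ∈ Finset.range j, β^(2*i+1) + s * β^(2*j+1)) := by
              rw [hwf]
          _ = (m:ℝ) * (1 + β * ∑ i ∈ Finset.range j, β^(2*i+1)) + s * β^(2*(j+1)) := by
              rw [show 2*(j+1) = (2*j+1)+1 by ring, pow_succ]; ring
          _ = (m:ℝ) * ∑ i ∈ Finset.range (j+1), β^(2*i) + s * β^(2*(j+1)) := by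
              rw [sum_even_succ]

/-- Lemma (case `β² = pβ + 1`, `p ≥ 1`, `m > ⌊β⌋`): with
`Ω = (-mβ/(β²-1), mβ²/(β²-1))` and `𝒮 = { z ∈ Σ_β(Ω) : 0 < z < m }`, the set `𝒮` is
finite and every positive `z ∈ Σ_β(Ω) \ X^m(β)` has the form
`z = m ∑_{i<j} β^{2i} + s β^{2j}` or `z = m ∑_{i<j} β^{2i+1} + s β^{2j+1}` with `s ∈ 𝒮`. -/
theorem cutProject_minus_spectrum_structure_plus (β : ℝ) (p : ℤ)
    (hβ : 1 < β) (hp : 1 ≤ p) (heq : β ^ 2 = p * β + 1)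
    (m : ℕ) (hm : ⌊β⌋ < (m : ℤ)) :
    {z : ℝ | z ∈ sigmaCP β ((p : ℝ) - β)
          (Set.Ioo (-((m : ℝ) * β) / (β ^ 2 - 1)) ((m : ℝ) * β ^ 2 / (β ^ 2 - 1))) ∧
        0 < z ∧ z < (m : ℝ)}.Finite ∧
    ∀ z : ℝ, 0 < z →
      z ∈ sigmaCP β ((p : ℝ) - β)
        (Set.Ioo (-((m : ℝ) * β) / (β ^ 2 - 1)) ((m : ℝ) * β ^ 2 / (β ^ 2 - 1))) →
      z ∉ Xspec β m →
      ∃ (j : ℕ) (s : ℝ),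
        (s ∈ sigmaCP β ((p : ℝ) - β)
            (Set.Ioo (-((m : ℝ) * β) / (β ^ 2 - 1)) ((m : ℝ) * β ^ 2 / (β ^ 2 - 1))) ∧
          0 < s ∧ s < (m : ℝ)) ∧
        (z = (m : ℝ) * ∑ i ∈ Finset.range j, β ^ (2 * i) + s * β ^ (2 * j) ∨
         z = (m : ℝ) * ∑ i ∈ Finset.range j, β ^ (2 * i + 1) + s * β ^ (2 * j + 1)) := by
  have hβ0 : (0:ℝ) < β := by linarith
  have hu0 : 0 < β - (p:ℝ) := by nlinarith
  have hul : β - (p:ℝ) < 1 := by nlinarith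
  have hfloor : ⌊β⌋ = p := by
    rw [Int.floor_eq_iff]
    constructor
    · linarith
    · push_cast; linarith
  have hpm : p + 1 ≤ (m:ℤ) := by rw [hfloor] at hm; omega
  have hm' : (p:ℝ) + 1 ≤ (m:ℝ) := by exact_mod_cast hpm
  have hD : 0 < β^2 - 1 := by nlinarith
  have hm0 : (0:ℝ) ≤ (m:ℝ) := by positivity
  constructor
  · -- finiteness
    set Tv : ℝ := (m:ℝ)*β^2/(β^2-1) with hTv_def
    obtain ⟨N, hN⟩ := exists_nat_gt ((m:ℝ) + ((m:ℝ) + ((m:ℝ) + Tv)) * (β+1))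
    apply Set.Finite.subset
      (Set.Finite.image (fun q : ℤ×ℤ => ((q.1:ℝ) + (q.2:ℝ)*β))
        ((Set.finite_Icc (-(N:ℤ)) N).prod (Set.finite_Icc (-(N:ℤ)) N)))
    rintro zz ⟨⟨a, b, rfl, hconj⟩, hz0, hzm⟩
    have hTv0 : 0 ≤ Tv := by rw [hTv_def]; positivity
    have hzbub : (a:ℝ) + b*((p:ℝ)-β) < Tv := hconj.2
    have hzblb : -Tv ≤ (a:ℝ) + b*((p:ℝ)-β) := by
      have h1 : ((m:ℝ)*β)/(β^2-1) ≤ Tv := by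
        rw [hTv_def]
        gcongr
        nlinarith [mul_nonneg (mul_nonneg hm0 hβ0.le) (by linarith : (0:ℝ) ≤ β - 1)]
      have h1' : -Tv ≤ -((m:ℝ)*β)/(β^2-1) := by
        rw [neg_div]
        linarith
      linarith [hconj.1]
    have habs_zb : |(a:ℝ) + b*((p:ℝ)-β)| ≤ Tv := abs_le.mpr ⟨hzblb, hzbub.le⟩
    have habs_z : |(a:ℝ) + b*β| ≤ (m:ℝ) := abs_le.mpr ⟨by linarith, hzm.le⟩
    have hb_eq : (b:ℝ) * (2*β - (p:ℝ)) = ((a:ℝ) + b*β) - ((a:ℝ) + b*((p:ℝ)-β)) := by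
      ring
    have h2βp : 1 ≤ 2*β - (p:ℝ) := by linarith
    have hb_abs : |(b:ℝ)| ≤ (m:ℝ) + Tv := by
      have h3 : |(b:ℝ)| * (2*β - (p:ℝ)) = |((a:ℝ) + b*β) - ((a:ℝ) + b*((p:ℝ)-β))| := by
        rw [← abs_of_pos (show (0:ℝ) < 2*β - (p:ℝ) by linarith), ← abs_mul, hb_eq]
      have h4 : |((a:ℝ) + b*β) - ((a:ℝ) + b*((p:ℝ)-β))| ≤ (m:ℝ) + Tv := by
        calc |((a:ℝ) + b*β) - ((a:ℝ) + b*((p:ℝ)-β))|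
            ≤ |(a:ℝ) + b*β| + |(a:ℝ) + b*((p:ℝ)-β)| := abs_sub _ _
          _ ≤ (m:ℝ) + Tv := add_le_add habs_z habs_zb
      nlinarith [abs_nonneg (b:ℝ)]
    have ha_abs : |(a:ℝ)| ≤ (m:ℝ) + ((m:ℝ) + Tv)*β := by
      have h5 : (a:ℝ) = ((a:ℝ) + b*β) - (b:ℝ)*β := by ring
      rw [h5]
      calc |((a:ℝ) + b*β) - (b:ℝ)*β| ≤ |(a:ℝ) + b*β| + |(b:ℝ)*β| := abs_sub _ _
        _ = |(a:ℝ) + b*β| + |(b:ℝ)| * β := by rw [abs_mul, abs_of_pos hβ0]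
        _ ≤ (m:ℝ) + ((m:ℝ) + Tv)*β := by
            nlinarith [mul_le_mul_of_nonneg_right hb_abs hβ0.le, habs_z]
    have haN : |(a:ℝ)| ≤ (N:ℝ) := by nlinarith [hb_abs, abs_nonneg (b:ℝ), hTv0]
    have hbN : |(b:ℝ)| ≤ (N:ℝ) := by nlinarith [abs_nonneg (b:ℝ), hTv0]
    refine ⟨(a, b), ?_, rfl⟩
    constructor
    · constructor
      · have := (abs_le.mp haN).1
        exact_mod_cast this
      · have := (abs_le.mp haN).2
        exact_mod_cast this
    · constructor
      · have := (abs_le.mp hbN).1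
        exact_mod_cast this
      · have := (abs_le.mp hbN).2
        exact_mod_cast this
  · -- structure
    intro z hz0 hzS hzX
    obtain ⟨a, b, hz_def, hconj⟩ := hzS
    rcases lt_or_ge z (m:ℝ) with hzm | hzm
    · exact ⟨0, z, ⟨⟨a, b, hz_def, hconj⟩, hz0, hzm⟩, Or.inl (by simp)⟩
    · have h1 : -((m:ℝ)*β) < ((a:ℝ) + b*((p:ℝ)-β))*(β^2-1) := (div_lt_iff₀ hD).mp hconj.1
      have h2 : ((a:ℝ) + b*((p:ℝ)-β))*(β^2-1) < (m:ℝ)*β^2 := (lt_div_iff₀ hD).mp hconj.2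
      have hres := mainInd hβ heq hp hm'
        ⌊((m:ℝ)*β^2/(β^2-1) / (1 - (β-(p:ℝ)))) * z⌋₊ a b z ((a:ℝ) + b*((p:ℝ)-β))
        hz_def rfl hzm h1 h2 hzX le_rfl
      rcases hres with ⟨_, hEv⟩ | ⟨_, hOdd⟩
      · obtain ⟨j, s, hs, hf⟩ := hEv
        exact ⟨j, s, hs, Or.inl hf⟩
      · obtain ⟨j, s, hs, hf⟩ := hOdd
        exact ⟨j, s, hs, Or.inr hf⟩
end

section
/- Let β be a quadratic Pisot unit with Galois conjugate β′, and for j = 0, 1, …, ⌊β⌋−1 set φ_j(β) = β − j and φ_{⌊β⌋}(β) = 1. Let Ω ⊆ ℝ be a bounded interval with length |Ω| ∈ (1, β]. If |Ω| ∈ ( φ_j(β), φ_{j−1}(β) ) for some j ∈ {1,…,⌊β⌋}, then the distances between consecutive points of Σ_β(Ω) take exactly the three values 1, j − β′, and j + 1 − β′. If |Ω| = φ_{j−1}(β) for some j ∈ {1,…,⌊β⌋} and Ω is semi-closed (contains exactly one of its endpoints), then the distances take exactly the two values 1 and j − β′. -/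
/-- `φ_j(β) = β - j` for `0 ≤ j ≤ ⌊β⌋ - 1` and `φ_{⌊β⌋}(β) = 1`. -/
noncomputable def phiGap (β : ℝ) (j : ℤ) : ℝ :=
  if j = ⌊β⌋ then 1 else β - (j : ℝ)

section Main

variable {β q : ℝ} {p j : ℤ} {c d : ℝ} {Ω : Set ℝ}

lemma qcases (h1 : 1 < β) (hq : q = (p : ℝ) - β)
    (hP : (1 ≤ p ∧ β * q = -1) ∨ (3 ≤ p ∧ β * q = 1)) :
    (β * q = -1 ∧ -1 < q ∧ q < 0) ∨ (β * q = 1 ∧ 0 < q ∧ q < 1/2 ∧ 2 < β) := by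
  rcases hP with ⟨hp, hE⟩ | ⟨hp, hE⟩
  · left
    refine ⟨hE, ?_, ?_⟩
    · nlinarith
    · nlinarith
  · right
    have hq1 : 0 < q := by nlinarith
    have hq2 : q < 1 := by nlinarith
    have hp3 : (3 : ℝ) ≤ (p : ℝ) := by exact_mod_cast hp
    have hb2 : 2 < β := by nlinarith
    refine ⟨hE, hq1, by nlinarith, hb2⟩

lemma mem_of_Ioo (hΩ : Ω = Set.Icc c d ∨ Ω = Set.Ico c d ∨ Ω = Set.Ioc c d ∨ Ω = Set.Ioo c d)
    {u : ℝ} (h1 : c < u) (h2 : u < d) : u ∈ Ω := by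
  rcases hΩ with h | h | h | h <;> subst h <;> simp only [Set.mem_Icc, Set.mem_Ico, Set.mem_Ioc,
    Set.mem_Ioo] <;> constructor <;> linarith

lemma bnd_of_mem (hΩ : Ω = Set.Icc c d ∨ Ω = Set.Ico c d ∨ Ω = Set.Ioc c d ∨ Ω = Set.Ioo c d)
    {u : ℝ} (h : u ∈ Ω) : c ≤ u ∧ u ≤ d := by
  rcases hΩ with hh | hh | hh | hh <;> subst hh <;>
    simp only [Set.mem_Icc, Set.mem_Ico, Set.mem_Ioc, Set.mem_Ioo] at h <;>
    exact ⟨by linarith [h.1], by linarith [h.2]⟩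

lemma convex_mem (hΩ : Ω = Set.Icc c d ∨ Ω = Set.Ico c d ∨ Ω = Set.Ioc c d ∨ Ω = Set.Ioo c d)
    {t s u : ℝ} (ht : t ∈ Ω) (hs : s ∈ Ω) (h1 : t ≤ u) (h2 : u ≤ s) : u ∈ Ω := by
  rcases hΩ with hh | hh | hh | hh <;> subst hh <;>
    simp only [Set.mem_Icc, Set.mem_Ico, Set.mem_Ioc, Set.mem_Ioo] at * <;>
    exact ⟨by rcases ht with ⟨a1, a2⟩; linarith, by rcases hs with ⟨b1, b2⟩; linarith⟩

lemma qsq (hq : q = (p : ℝ) - β)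
    (hP : (1 ≤ p ∧ β * q = -1) ∨ (3 ≤ p ∧ β * q = 1)) :
    ∃ ee : ℤ, (ee = 1 ∨ ee = -1) ∧ q ^ 2 = p * q + ee := by
  subst hq
  rcases hP with ⟨-, hE⟩ | ⟨-, hE⟩
  · exact ⟨1, Or.inl rfl, by push_cast; linear_combination -hE⟩
  · exact ⟨-1, Or.inr rfl, by push_cast; linear_combination -hE⟩

lemma pow_rep (hq : q = (p : ℝ) - β)
    (hP : (1 ≤ p ∧ β * q = -1) ∨ (3 ≤ p ∧ β * q = 1)) :
    ∀ k : ℕ, ∃ A B : ℤ, q ^ k = (A : ℝ) + (B : ℝ) * q := by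
  obtain ⟨ee, -, hee⟩ := qsq hq hP
  intro k
  induction k with
  | zero => exact ⟨1, 0, by norm_num⟩
  | succ n ih =>
      obtain ⟨A, B, hAB⟩ := ih
      refine ⟨B * ee, A + B * p, ?_⟩
      have : q ^ (n + 1) = q ^ n * q := by ring
      rw [this, hAB]
      push_cast
      linear_combination (B : ℝ) * hee

lemma lattice_dense (h1 : 1 < β) (hq : q = (p : ℝ) - β)
    (hP : (1 ≤ p ∧ β * q = -1) ∨ (3 ≤ p ∧ β * q = 1))
    {lo hi : ℝ} (h : lo < hi) : ∃ a b : ℤ, lo < (a : ℝ) + b * q ∧ (a : ℝ) + b * q < hi := by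
  have hq0 : q ≠ 0 := by
    rcases hP with ⟨-, hE⟩ | ⟨-, hE⟩ <;> intro h0 <;> rw [h0] at hE <;> norm_num at hE
  have habs : |q| < 1 := by
    rcases qcases h1 hq hP with ⟨-, h2, h3⟩ | ⟨-, h2, h3, -⟩
    · rw [abs_of_neg h3]; linarith
    · rw [abs_of_pos h2]; linarith
  obtain ⟨k, hk⟩ := exists_pow_lt_of_lt_one (by linarith : (0:ℝ) < hi - lo) habs
  set s := |q| ^ k with hs
  have hs0 : 0 < s := pow_pos (abs_pos.2 hq0) k
  obtain ⟨A, B, hAB⟩ := pow_rep hq hP k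
  set m : ℤ := ⌊lo / s⌋ + 1 with hm
  have hms1 : lo < m * s := by
    have := Int.lt_floor_add_one (lo / s)
    have h2 : lo / s < (m : ℝ) := by rw [hm]; push_cast; linarith
    calc lo = lo / s * s := by field_simp
    _ < m * s := by exact mul_lt_mul_of_pos_right h2 hs0
  have hms2 : m * s < hi := by
    have := Int.floor_le (lo / s)
    have h2 : (m : ℝ) ≤ lo / s + 1 := by rw [hm]; push_cast; linarith
    have h3 : (m:ℝ) * s ≤ (lo / s + 1) * s := mul_le_mul_of_nonneg_right h2 (le_of_lt hs0)
    have h4 : (lo / s + 1) * s = lo + s := by field_simp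
    linarith
  have hsabs : s = q ^ k ∨ s = -(q ^ k) := by
    rw [hs, ← abs_pow]; rcases abs_cases (q ^ k) with ⟨h5, -⟩ | ⟨h5, -⟩
    · left; exact h5
    · right; exact h5
  rcases hsabs with h5 | h5
  · have key : (m:ℝ) * s = ((m*A : ℤ) : ℝ) + ((m*B : ℤ) : ℝ) * q := by
      rw [h5, hAB]; push_cast; ring
    exact ⟨m*A, m*B, by rw [← key]; exact hms1, by rw [← key]; exact hms2⟩
  · have key : (m:ℝ) * s = (((-(m*A)) : ℤ) : ℝ) + (((-(m*B)) : ℤ) : ℝ) * q := by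
      rw [h5, hAB]; push_cast; ring
    exact ⟨-(m*A), -(m*B), by rw [← key]; exact hms1, by rw [← key]; exact hms2⟩


lemma sigma_finite {β q : ℝ} {c d : ℝ} {Ω : Set ℝ} (h1 : 1 < β) (hq1 : q < 1)
    (hbd : ∀ t ∈ Ω, c ≤ t ∧ t ≤ d) (u v : ℝ) :
    (sigmaCP β q Ω ∩ Set.Icc u v).Finite := by
  have hbq : 0 < β - q := by linarith
  set B₁ : ℤ := ⌊(u - d) / (β - q)⌋ with hB₁
  set B₂ : ℤ := ⌈(v - c) / (β - q)⌉ with hB₂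
  set A₁ : ℤ := ⌊u - (B₂ : ℝ) * β⌋ with hA₁
  set A₂ : ℤ := ⌈v - (B₁ : ℝ) * β⌉ with hA₂
  apply Set.Finite.subset (Set.Finite.image (f := fun ab : ℤ × ℤ => ((ab.1 : ℝ) + ab.2 * β))
    ((Set.finite_Icc A₁ A₂).prod (Set.finite_Icc B₁ B₂)))
  rintro x ⟨⟨a, b, hx, ht⟩, hu, hv⟩
  obtain ⟨htc, htd⟩ := hbd _ ht
  have hb1 : (B₁ : ℝ) ≤ b := by
    have h2 : (u - d) / (β - q) ≤ (b : ℝ) := by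
      rw [div_le_iff₀ hbq]; nlinarith [hx, htd]
    calc (B₁ : ℝ) ≤ (u - d) / (β - q) := Int.floor_le _
    _ ≤ b := h2
  have hb2 : (b : ℝ) ≤ B₂ := by
    have h2 : (b : ℝ) ≤ (v - c) / (β - q) := by
      rw [le_div_iff₀ hbq]; nlinarith [hx, htc]
    calc (b : ℝ) ≤ (v - c) / (β - q) := h2
    _ ≤ B₂ := Int.le_ceil _
  have ha1 : (A₁ : ℝ) ≤ a := by
    calc (A₁ : ℝ) ≤ u - (B₂ : ℝ) * β := Int.floor_le _
    _ ≤ a := by nlinarith [hx]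
  have ha2 : (a : ℝ) ≤ A₂ := by
    calc (a : ℝ) ≤ v - (B₁ : ℝ) * β := by nlinarith [hx]
    _ ≤ A₂ := Int.le_ceil _
  refine ⟨(a, b), ⟨?_, ?_⟩, hx.symm⟩
  · exact Set.mem_Icc.2 ⟨by exact_mod_cast ha1, by exact_mod_cast ha2⟩
  · exact Set.mem_Icc.2 ⟨by exact_mod_cast hb1, by exact_mod_cast hb2⟩

lemma noMid (h1 : 1 < β) (hq : q = (p : ℝ) - β)
    (hP : (1 ≤ p ∧ β * q = -1) ∨ (3 ≤ p ∧ β * q = 1))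
    (hj1 : 1 ≤ j) (hjβ : (j : ℝ) < β) (hcd : c < d)
    (hΩ : Ω = Set.Icc c d ∨ Ω = Set.Ico c d ∨ Ω = Set.Ioc c d ∨ Ω = Set.Ioo c d)
    (hl1 : 1 < d - c) (hl2 : d - c ≤ β) (hlj : β - (j : ℝ) < d - c)
    (hcase : d - c < β + 1 - (j : ℝ) ∨
      (d - c = β + 1 - (j : ℝ) ∧ (Ω = Set.Ico c d ∨ Ω = Set.Ioc c d)))
    {x t g : ℝ} {a b : ℤ} (hxa : x = (a : ℝ) + b * β) (hta : t = (a : ℝ) + b * q)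
    (ht : t ∈ Ω)
    (hgap : (g = 1 ∧ (1 < (j : ℝ) - q ∨ t + ((j : ℝ) - β) ∉ Ω))
      ∨ (g = (j : ℝ) - q ∧ ((j : ℝ) - q < 1 ∨ t + 1 ∉ Ω))
      ∨ (g = (j : ℝ) + 1 - q ∧ t + 1 ∉ Ω ∧ t + ((j : ℝ) - β) ∉ Ω ∧
          d - c < β + 1 - (j : ℝ))) :
    ∀ y ∈ sigmaCP β q Ω, x < y → x + g ≤ y := by
  have qc := qcases h1 hq hP
  have hqu : q < 1 := by rcases qc with ⟨-, -, h⟩ | ⟨-, -, h, -⟩ <;> linarith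
  have hql : -1 < q := by rcases qc with ⟨-, h, -⟩ | ⟨-, h, -, -⟩ <;> linarith
  have hpr : (p : ℝ) = β + q := by rw [hq]; ring
  have hj1R : (1 : ℝ) ≤ (j : ℝ) := by exact_mod_cast hj1
  intro y hy hxy
  by_contra hcon
  push_neg at hcon
  obtain ⟨a', b', hya, hs⟩ := hy
  set s : ℝ := (a' : ℝ) + b' * q with hsdef
  obtain ⟨hsc, hsd⟩ := bnd_of_mem hΩ hs
  obtain ⟨htc, htd⟩ := bnd_of_mem hΩ ht
  obtain ⟨A, hA⟩ : ∃ A : ℤ, A = a' - a := ⟨_, rfl⟩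
  obtain ⟨B, hB⟩ : ∃ B : ℤ, B = b' - b := ⟨_, rfl⟩
  have hw : y - x = (A : ℝ) + B * β := by rw [hA, hB, hxa, hya]; push_cast; ring
  have hw' : s - t = (A : ℝ) + B * q := by rw [hA, hB, hta, hsdef]; push_cast; ring
  have hwpos : 0 < y - x := by linarith
  have hgle : g ≤ (j : ℝ) + 1 - q := by
    rcases hgap with ⟨hg, -⟩ | ⟨hg, -⟩ | ⟨hg, -⟩ <;> rw [hg] <;> linarith
  have hwg : y - x < g := by linarith
  -- bounds on B
  have hbq : 0 < β - q := by linarith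
  have hBlt : (B : ℝ) < 3 := by
    have key : (B : ℝ) * (β - q) = (y - x) - (s - t) := by rw [hw, hw']; ring
    have h2 : (B : ℝ) * (β - q) < 3 * (β - q) := by
      rcases qc with ⟨-, hh1, hh2⟩ | ⟨-, hh1, hh2, hh3⟩ <;>
        linarith [key, hwg, hgle, hsc, htd, hl2, hjβ]
    exact lt_of_mul_lt_mul_right (by linarith [h2]) (le_of_lt hbq)
  have hBgt : (-3 : ℝ) < (B : ℝ) := by
    have key : (B : ℝ) * (β - q) = (y - x) - (s - t) := by rw [hw, hw']; ring
    have h2 : (-3) * (β - q) < (B : ℝ) * (β - q) := by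
      rcases qc with ⟨-, hh1, hh2⟩ | ⟨-, hh1, hh2, hh3⟩ <;>
        linarith [key, hwpos, hsd, htc, hl2]
    exact lt_of_mul_lt_mul_right (by linarith [h2]) (le_of_lt hbq)
  have hBcases : B = -2 ∨ B = -1 ∨ B = 0 ∨ B = 1 ∨ B = 2 := by
    have h3 : B < 3 := by exact_mod_cast hBlt
    have h4 : -3 < B := by exact_mod_cast hBgt
    omega
  rcases hBcases with hBv | hBv | hBv | hBv | hBv <;> rw [hBv] at hw hw' <;>
    push_cast at hw hw'
  · -- B = -2
    have h3 : (A : ℝ) > 2 * β := by linarith [hwpos, hw]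
    have h4 : (A : ℝ) ≤ β + 2 * q := by linarith [hw', hsd, htc, hl2]
    rcases qc with ⟨-, hh1, hh2⟩ | ⟨-, hh1, hh2, hh3⟩ <;> linarith
  · -- B = -1
    have hAβ : β < (A : ℝ) := by linarith [hwpos, hw]
    have hAp : (A : ℝ) ≤ (p : ℝ) := by rw [hpr]; linarith [hw', hsd, htc, hl2]
    rcases qc with ⟨-, hh1, hh2⟩ | ⟨-, hh1, hh2, hh3⟩
    · have : (p : ℝ) < β := by rw [hpr]; linarith
      linarith
    · have hblo : (p : ℝ) - 1 < β := by rw [hpr]; linarith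
      have hA1 : A ≤ p := by exact_mod_cast hAp
      have hA2 : p - 1 < A := by
        have : ((p : ℤ) : ℝ) - 1 < (A : ℝ) := by linarith
        exact_mod_cast this
      have hAe : A = p := by omega
      rw [hAe] at hw hw'
      have hyx : y - x = q := by rw [hw, hpr]; ring
      have hst : s - t = β := by rw [hw', hpr]; ring
      have hdc : d - c = β := by linarith [hsd, htc]
      have hsd2 : s = d := by linarith
      have htc2 : t = c := by linarith
      rcases hcase with hc | ⟨hc, hsemi⟩
      · linarith
      · rcases hsemi with hio | hio
        · rw [hio] at hs; rw [hsd2] at hs; exact absurd hs.2 (lt_irrefl d)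
        · rw [hio] at ht; rw [htc2] at ht; exact absurd ht.1 (lt_irrefl c)
  · -- B = 0
    have hA1 : (1 : ℝ) ≤ (A : ℝ) := by
      have h0 : (0 : ℝ) < (A : ℝ) := by linarith [hwpos, hw]
      have : 0 < A := by exact_mod_cast h0
      have : 1 ≤ A := this
      exact_mod_cast this
    have ht1 : t + 1 ∈ Ω := by
      refine convex_mem hΩ ht hs (by linarith) (by linarith [hw', hA1])
    rcases hgap with ⟨hg, -⟩ | ⟨hg, hpre⟩ | ⟨hg, hpre, -, -⟩
    · rw [hg] at hwg; linarith [hw]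
    · rcases hpre with h | h
      · rw [hg] at hwg; linarith [hw]
      · exact h ht1
    · exact hpre ht1
  · -- B = 1
    obtain ⟨m, hm⟩ : ∃ m : ℤ, m = A + p - j := ⟨_, rfl⟩
    have hwm : y - x = ((j : ℝ) - q) + (m : ℝ) := by
      rw [hm]; push_cast; rw [hw, hpr]; ring
    have hwm' : s - t = ((j : ℝ) - β) + (m : ℝ) := by
      rw [hm]; push_cast; rw [hw', hpr]; ring
    rcases lt_trichotomy m 0 with hm0 | hm0 | hm0
    · have hmR : (m : ℝ) ≤ -1 := by
        have hx9 : m ≤ -1 := by omega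
        exact_mod_cast hx9
      have h3 : t - s ≤ d - c := by linarith [htd, hsc]
      rcases hcase with hc | ⟨hc, hsemi⟩
      · linarith [hwm']
      · have hmge : (-1 : ℝ) ≤ (m : ℝ) := by linarith [hwm']
        have hme : (m : ℝ) = -1 := le_antisymm hmR hmge
        have hst : t - s = d - c := by rw [hc]; linarith [hwm']
        have hsc2 : s = c := by linarith
        have htd2 : t = d := by linarith
        rcases hsemi with hio | hio
        · rw [hio] at ht; rw [htd2] at ht; exact absurd ht.2 (lt_irrefl d)
        · rw [hio] at hs; rw [hsc2] at hs; exact absurd hs.1 (lt_irrefl c)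
    · have hmR : (m : ℝ) = 0 := by exact_mod_cast hm0
      have hmem : t + ((j : ℝ) - β) ∈ Ω := by
        have he : t + ((j : ℝ) - β) = s := by linarith [hwm']
        rw [he]; exact hs
      rcases hgap with ⟨hg, hpre⟩ | ⟨hg, -⟩ | ⟨hg, -, hpre, -⟩
      · rcases hpre with h | h
        · rw [hg] at hwg; linarith [hwm]
        · exact h hmem
      · rw [hg] at hwg; linarith [hwm]
      · exact hpre hmem
    · have hmR : (1 : ℝ) ≤ (m : ℝ) := by exact_mod_cast hm0
      linarith [hwm, hgle]
  · -- B = 2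
    rcases qc with ⟨-, hh1, hh2⟩ | ⟨-, hh1, hh2, hh3⟩
    · -- q < 0
      have hpβ : (p : ℝ) < β := by rw [hpr]; linarith
      have hjp : (j : ℝ) ≤ (p : ℝ) := by
        have : (j : ℝ) < (p : ℝ) + 1 := by linarith
        have h5 : j < p + 1 := by exact_mod_cast this
        have h6 : j ≤ p := by omega
        exact_mod_cast h6
      have hA : (A : ℝ) ≤ -(p : ℝ) := by
        have h5 : (A : ℝ) < 1 - β := by
          have := hwg; rw [hw] at this
          have h7 : g ≤ (p : ℝ) + 1 - q := by linarith [hgle]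
          rw [hpr] at h7; linarith
        have h6 : (A : ℝ) < 1 - (p : ℝ) := by linarith
        have h7 : A < 1 - p := by exact_mod_cast h6
        have h8 : A ≤ -p := by omega
        exact_mod_cast h8
      have hst : s - t ≥ c - d := by linarith
      have h9 : (A : ℝ) + 2 * q ≤ -(p : ℝ) + 2 * q := by linarith
      rw [hpr] at h9
      linarith [hw']
    · -- 0 < q
      have hpβ : β < (p : ℝ) := by rw [hpr]; linarith
      have hblo : (p : ℝ) - 1 < β := by rw [hpr]; linarith
      have hjp : (j : ℝ) ≤ (p : ℝ) - 1 := by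
        have h5 : j < p := by exact_mod_cast lt_trans hjβ hpβ
        have h6 : j ≤ p - 1 := by omega
        have : ((j : ℤ) : ℝ) ≤ ((p - 1 : ℤ) : ℝ) := by exact_mod_cast h6
        push_cast at this; linarith
      have hA2 : A ≤ -p := by
        have h5 : (A : ℝ) < -β := by
          have := hwg; rw [hw] at this
          have h7 : g ≤ (p : ℝ) - q := by linarith [hgle]
          rw [hpr] at h7; linarith
        have h6 : (A : ℝ) < 1 - (p : ℝ) := by linarith
        have h7 : A < 1 - p := by exact_mod_cast h6
        omega
      have hA3 : -p ≤ A := by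
        have h5 : (A : ℝ) + 2 * q ≥ c - d := by linarith [hw', hsc, htd]
        have h6 : (A : ℝ) > -(p : ℝ) - 1 := by rw [hpr]; linarith
        have h7 : A > -p - 1 := by exact_mod_cast h6
        omega
      have hAe : A = -p := le_antisymm hA2 hA3
      rw [hAe] at hw hw'
      push_cast at hw hw'
      have hyx : y - x = β - q := by rw [hw, hpr]; ring
      have hst : s - t = q - β := by rw [hw', hpr]; ring
      rcases hgap with ⟨hg, -⟩ | ⟨hg, -⟩ | ⟨hg, -, -, hcl⟩
      · rw [hg] at hwg; linarith
      · rw [hg] at hwg; linarith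
      · have h5 : β - q ≤ d - c := by linarith [hsc, htd]
        have h6 : (j : ℝ) < 1 + q := by linarith
        have h7 : j < 2 := by
          have : (j : ℝ) < 2 := by linarith
          exact_mod_cast this
        have h8 : (j : ℝ) ≤ 1 := by
          have : j ≤ 1 := by omega
          exact_mod_cast this
        rw [hg] at hwg; linarith

end Main

section Main2

variable {β q : ℝ} {p j : ℤ} {c d : ℝ} {Ω : Set ℝ}

lemma ge_of_notMem (hΩ : Ω = Set.Icc c d ∨ Ω = Set.Ico c d ∨ Ω = Set.Ioc c d ∨ Ω = Set.Ioo c d)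
    {u : ℝ} (hu : u ∉ Ω) (hc : c < u) : d ≤ u := by
  by_contra h
  push_neg at h
  exact hu (mem_of_Ioo hΩ hc h)

lemma le_of_notMem (hΩ : Ω = Set.Icc c d ∨ Ω = Set.Ico c d ∨ Ω = Set.Ioc c d ∨ Ω = Set.Ioo c d)
    {u : ℝ} (hu : u ∉ Ω) (hd : u < d) : u ≤ c := by
  by_contra h
  push_neg at h
  exact hu (mem_of_Ioo hΩ h hd)

lemma tot (hj1 : 1 ≤ j) (hjβ : (j : ℝ) < β) (hcd : c < d)
    (hΩ : Ω = Set.Icc c d ∨ Ω = Set.Ico c d ∨ Ω = Set.Ioc c d ∨ Ω = Set.Ioo c d)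
    (hl1 : 1 < d - c) (hlj : β - (j : ℝ) < d - c)
    (hcase : d - c < β + 1 - (j : ℝ) ∨
      (d - c = β + 1 - (j : ℝ) ∧ (Ω = Set.Ico c d ∨ Ω = Set.Ioc c d)))
    {t : ℝ} (ht : t ∈ Ω) (h1m : t + 1 ∉ Ω) (h2m : t + ((j : ℝ) - β) ∉ Ω) :
    d - c < β + 1 - (j : ℝ) ∧ t + ((j : ℝ) + 1 - β) ∈ Ω := by
  obtain ⟨htc, htd⟩ := bnd_of_mem hΩ ht
  have hd1 : d ≤ t + 1 := ge_of_notMem hΩ h1m (by linarith)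
  have hc2 : t + ((j : ℝ) - β) ≤ c := le_of_notMem hΩ h2m (by linarith)
  have hpart : d - c < β + 1 - (j : ℝ) := by
    rcases hcase with hcs | ⟨hceq, hsemi⟩
    · exact hcs
    · exfalso
      have ht1 : t + 1 = d := by linarith
      have ht2 : t + ((j : ℝ) - β) = c := by linarith
      rcases hsemi with hio | hio
      · refine h2m ?_
        rw [ht2, hio]
        exact ⟨le_refl c, hcd⟩
      · refine h1m ?_
        rw [ht1, hio]
        exact ⟨hcd, le_refl d⟩
  exact ⟨hpart, mem_of_Ioo hΩ (by linarith) (by linarith)⟩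

lemma succEx (h1 : 1 < β) (hq : q = (p : ℝ) - β)
    (hP : (1 ≤ p ∧ β * q = -1) ∨ (3 ≤ p ∧ β * q = 1))
    (hj1 : 1 ≤ j) (hjβ : (j : ℝ) < β) (hcd : c < d)
    (hΩ : Ω = Set.Icc c d ∨ Ω = Set.Ico c d ∨ Ω = Set.Ioc c d ∨ Ω = Set.Ioo c d)
    (hl1 : 1 < d - c) (hl2 : d - c ≤ β) (hlj : β - (j : ℝ) < d - c)
    (hcase : d - c < β + 1 - (j : ℝ) ∨
      (d - c = β + 1 - (j : ℝ) ∧ (Ω = Set.Ico c d ∨ Ω = Set.Ioc c d))) :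
    ∀ x ∈ sigmaCP β q Ω, ∃ g : ℝ,
      (g = 1 ∨ g = (j : ℝ) - q ∨ (d - c < β + 1 - (j : ℝ) ∧ g = (j : ℝ) + 1 - q)) ∧
      0 < g ∧ x + g ∈ sigmaCP β q Ω ∧ ∀ y ∈ sigmaCP β q Ω, x < y → x + g ≤ y := by
  have qc := qcases h1 hq hP
  have hqu : q < 1 := by rcases qc with ⟨-, -, h⟩ | ⟨-, -, h, -⟩ <;> linarith
  have hql : -1 < q := by rcases qc with ⟨-, h, -⟩ | ⟨-, h, -, -⟩ <;> linarith
  have hq0 : q ≠ 0 := by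
    rcases qc with ⟨-, -, h⟩ | ⟨-, h, -, -⟩ <;> intro h0 <;> rw [h0] at h <;> norm_num at h
  have hj1R : (1 : ℝ) ≤ (j : ℝ) := by exact_mod_cast hj1
  intro x hx
  obtain ⟨a, b, hxa, ht⟩ := hx
  set t : ℝ := (a : ℝ) + b * q with htdef
  have hg2ne1 : (j : ℝ) - q ≠ 1 := by
    intro h
    by_cases hj2 : 2 ≤ j
    · have : (2 : ℝ) ≤ (j : ℝ) := by exact_mod_cast hj2
      linarith
    · have hje : j = 1 := by omega
      rw [hje] at h
      push_cast at h
      exact hq0 (by linarith)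
  by_cases h1m : t + 1 ∈ Ω
  · by_cases h2m : t + ((j : ℝ) - β) ∈ Ω
    · by_cases ho : 1 < (j : ℝ) - q
      · -- gap 1
        refine ⟨1, Or.inl rfl, one_pos, ⟨a + 1, b, ?_, ?_⟩, ?_⟩
        · rw [hxa]; push_cast; ring
        · have he : ((a + 1 : ℤ) : ℝ) + (b : ℝ) * q = t + 1 := by push_cast; ring
          rw [he]; exact h1m
        · exact noMid h1 hq hP hj1 hjβ hcd hΩ hl1 hl2 hlj hcase hxa htdef ht
            (Or.inl ⟨rfl, Or.inl ho⟩)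
      · -- gap j - q
        have hlt1 : (j : ℝ) - q < 1 := lt_of_le_of_ne (not_lt.mp ho) hg2ne1
        refine ⟨(j : ℝ) - q, Or.inr (Or.inl rfl), by linarith, ⟨a + j - p, b + 1, ?_, ?_⟩, ?_⟩
        · rw [hxa]; push_cast; rw [hq]; ring
        · have he : ((a + j - p : ℤ) : ℝ) + ((b + 1 : ℤ) : ℝ) * q = t + ((j : ℝ) - β) := by
            rw [htdef]; push_cast; linear_combination hq
          rw [he]; exact h2m
        · exact noMid h1 hq hP hj1 hjβ hcd hΩ hl1 hl2 hlj hcase hxa htdef ht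
            (Or.inr (Or.inl ⟨rfl, Or.inl hlt1⟩))
    · -- gap 1 via ¬h2m
      refine ⟨1, Or.inl rfl, one_pos, ⟨a + 1, b, ?_, ?_⟩, ?_⟩
      · rw [hxa]; push_cast; ring
      · have he : ((a + 1 : ℤ) : ℝ) + (b : ℝ) * q = t + 1 := by push_cast; ring
        rw [he]; exact h1m
      · exact noMid h1 hq hP hj1 hjβ hcd hΩ hl1 hl2 hlj hcase hxa htdef ht
          (Or.inl ⟨rfl, Or.inr h2m⟩)
  · by_cases h2m : t + ((j : ℝ) - β) ∈ Ω
    · -- gap j - q via ¬h1m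
      refine ⟨(j : ℝ) - q, Or.inr (Or.inl rfl), by linarith, ⟨a + j - p, b + 1, ?_, ?_⟩, ?_⟩
      · rw [hxa]; push_cast; rw [hq]; ring
      · have he : ((a + j - p : ℤ) : ℝ) + ((b + 1 : ℤ) : ℝ) * q = t + ((j : ℝ) - β) := by
          rw [htdef]; push_cast; linear_combination hq
        rw [he]; exact h2m
      · exact noMid h1 hq hP hj1 hjβ hcd hΩ hl1 hl2 hlj hcase hxa htdef ht
          (Or.inr (Or.inl ⟨rfl, Or.inr h1m⟩))
    · -- gap j + 1 - q
      obtain ⟨hpart, hmem3⟩ := tot hj1 hjβ hcd hΩ hl1 hlj hcase ht h1m h2m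
      refine ⟨(j : ℝ) + 1 - q, Or.inr (Or.inr ⟨hpart, rfl⟩), by linarith,
        ⟨a + j + 1 - p, b + 1, ?_, ?_⟩, ?_⟩
      · rw [hxa]; push_cast; rw [hq]; ring
      · have he : ((a + j + 1 - p : ℤ) : ℝ) + ((b + 1 : ℤ) : ℝ) * q =
            t + ((j : ℝ) + 1 - β) := by rw [htdef]; push_cast; linear_combination hq
        rw [he]; exact hmem3
      · exact noMid h1 hq hP hj1 hjβ hcd hΩ hl1 hl2 hlj hcase hxa htdef ht
          (Or.inr (Or.inr ⟨rfl, h1m, h2m, hpart⟩))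

end Main2

lemma enumerate (S : Set ℝ) (G : Set ℝ)
    (hfin : ∀ u v : ℝ, (S ∩ Set.Icc u v).Finite)
    (z0 : ℝ) (hz0 : z0 ∈ S)
    (hsucc : ∀ x ∈ S, ∃ g, g ∈ G ∧ 0 < g ∧ x + g ∈ S ∧ ∀ y ∈ S, x < y → x + g ≤ y)
    (hpred : ∀ x ∈ S, ∃ g, g ∈ G ∧ 0 < g ∧ x - g ∈ S ∧ ∀ y ∈ S, y < x → y ≤ x - g) :
    ∃ x : ℤ → ℝ, StrictMono x ∧ Set.range x = S ∧
      {g : ℝ | ∃ k : ℤ, g = x (k + 1) - x k} ⊆ G ∧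
      ∀ g : ℝ, 0 < g → (∃ z ∈ S, z + g ∈ S ∧ ∀ y ∈ S, z < y → z + g ≤ y) →
        g ∈ {g : ℝ | ∃ k : ℤ, g = x (k + 1) - x k} := by
  classical
  choose gf hgf1 hgf2 hgf3 hgf4 using hsucc
  choose gp hgp1 hgp2 hgp3 hgp4 using hpred
  set T : {z : ℝ // z ∈ S} → {z : ℝ // z ∈ S} :=
    fun z => ⟨z.1 + gf z.1 z.2, hgf3 z.1 z.2⟩ with hT
  set P : {z : ℝ // z ∈ S} → {z : ℝ // z ∈ S} :=
    fun z => ⟨z.1 - gp z.1 z.2, hgp3 z.1 z.2⟩ with hP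
  set F : ℕ → {z : ℝ // z ∈ S} := fun n => T^[n] ⟨z0, hz0⟩ with hF
  set Bk : ℕ → {z : ℝ // z ∈ S} := fun n => P^[n] ⟨z0, hz0⟩ with hBk
  have hF0 : (F 0).1 = z0 := rfl
  have hB0 : (Bk 0).1 = z0 := rfl
  have hFs : ∀ n, F (n + 1) = T (F n) := fun n => Function.iterate_succ_apply' T n _
  have hBs : ∀ n, Bk (n + 1) = P (Bk n) := fun n => Function.iterate_succ_apply' P n _
  have hFlt : ∀ n, (F n).1 < (F (n + 1)).1 := by
    intro n; rw [hFs]; exact lt_add_of_pos_right _ (hgf2 _ _)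
  have hBlt : ∀ n, (Bk (n + 1)).1 < (Bk n).1 := by
    intro n; rw [hBs]; exact sub_lt_self _ (hgp2 _ _)
  have hFmono : StrictMono (fun n => (F n).1) := strictMono_nat_of_lt_succ hFlt
  have hBanti : StrictAnti (fun n => (Bk n).1) := strictAnti_nat_of_succ_lt hBlt
  set x : ℤ → ℝ := fun k => if 0 ≤ k then (F k.toNat).1 else (Bk (-k).toNat).1 with hx
  have hxnat : ∀ n : ℕ, x n = (F n).1 := by
    intro n; rw [hx]; simp
  have hxmem : ∀ k, x k ∈ S := by
    intro k; rw [hx]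
    by_cases h : 0 ≤ k
    · simp only [h, if_pos]; exact (F k.toNat).2
    · simp only [h, if_neg, not_false_iff]; exact (Bk (-k).toNat).2
  have key : ∀ k : ℤ, ∃ g, g ∈ G ∧ 0 < g ∧ x (k + 1) = x k + g ∧
      (∀ y ∈ S, x k < y → x k + g ≤ y) := by
    intro k
    rcases le_or_gt 0 k with hk | hk
    · have e1 : x k = (F k.toNat).1 := by rw [hx]; simp [hk]
      have e2 : x (k + 1) = (F (k.toNat + 1)).1 := by
        have h1 : 0 ≤ k + 1 := by omega
        have h2 : (k + 1).toNat = k.toNat + 1 := by omega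
        rw [hx]; simp only [h1, if_pos]; rw [h2]
      refine ⟨gf (F k.toNat).1 (F k.toNat).2, hgf1 _ _, hgf2 _ _, ?_, ?_⟩
      · rw [e1, e2, hFs]
      · rw [e1]; exact hgf4 _ _
    · obtain ⟨n, hn⟩ : ∃ n : ℕ, (-k).toNat = n + 1 := ⟨(-(k+1)).toNat, by omega⟩
      have e1 : x k = (Bk (n + 1)).1 := by
        rw [hx]; simp only [not_le.mpr hk, if_neg, not_false_iff]; rw [hn]
      have e2 : x (k + 1) = (Bk n).1 := by
        by_cases h0 : 0 ≤ k + 1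
        · have hk0 : k + 1 = 0 := by omega
          have hn0 : n = 0 := by omega
          rw [hk0, hn0]
          have h5 : x 0 = (F 0).1 := by
            have := hxnat 0
            simpa using this
          rw [h5, hF0, hB0]
        · have h2 : (-(k + 1)).toNat = n := by omega
          rw [hx]; simp only [h0, if_neg, not_false_iff]; rw [h2]
      refine ⟨gp (Bk n).1 (Bk n).2, hgp1 _ _, hgp2 _ _, ?_, ?_⟩
      · rw [e1, e2, hBs]
        show ((Bk n).1 : ℝ) = ((Bk n).1 - gp (Bk n).1 (Bk n).2) + gp (Bk n).1 (Bk n).2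
        ring
      · intro y hy hlt
        have e3 : x k = (Bk n).1 - gp (Bk n).1 (Bk n).2 := by rw [e1, hBs]
        rw [e3] at hlt ⊢
        have h4 := hgp4 (Bk n).1 (Bk n).2 y hy
        by_cases h5 : y < (Bk n).1
        · exact absurd (h4 h5) (by linarith)
        · push_neg at h5; linarith
  have hmonoZ : StrictMono x := by
    apply strictMono_int_of_lt_succ
    intro k
    obtain ⟨g, -, hg0, he, -⟩ := key k
    rw [he]; linarith
  have hrange : Set.range x = S := by
    apply Set.eq_of_subset_of_subset
    · rintro _ ⟨k, rfl⟩; exact hxmem k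
    · intro z hz
      rcases le_or_gt z0 z with hz0z | hz0z
      · have hex : ∃ n : ℕ, (F n).1 = z := by
          by_contra hne
          push_neg at hne
          have hle : ∀ n : ℕ, (F n).1 ≤ z := by
            intro n
            induction n with
            | zero => exact hz0z
            | succ m ih =>
                have hlt : (F m).1 < z := lt_of_le_of_ne ih (hne m)
                have := hgf4 (F m).1 (F m).2 z hz hlt
                rw [hFs]; exact this
          have hinj : Function.Injective (fun n => (F n).1) := hFmono.injective
          have hmem : ∀ n : ℕ, (F n).1 ∈ S ∩ Set.Icc z0 z := by
            intro n
            refine ⟨(F n).2, ?_, hle n⟩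
            calc z0 = (F 0).1 := hF0.symm
            _ ≤ (F n).1 := hFmono.monotone (Nat.zero_le n)
          exact (Set.infinite_of_injective_forall_mem hinj hmem) (hfin z0 z)
        obtain ⟨n, hn⟩ := hex
        exact ⟨(n : ℤ), by rw [← hn, ← hxnat n]⟩
      · have hex : ∃ n : ℕ, (Bk n).1 = z := by
          by_contra hne
          push_neg at hne
          have hge : ∀ n : ℕ, z ≤ (Bk n).1 := by
            intro n
            induction n with
            | zero => exact le_of_lt hz0z
            | succ m ih =>
                have hlt : z < (Bk m).1 := lt_of_le_of_ne ih (fun h => hne m h.symm)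
                have := hgp4 (Bk m).1 (Bk m).2 z hz hlt
                rw [hBs]; exact this
          have hinj : Function.Injective (fun n => (Bk n).1) := hBanti.injective
          have hmem : ∀ n : ℕ, (Bk n).1 ∈ S ∩ Set.Icc z z0 := by
            intro n
            refine ⟨(Bk n).2, hge n, ?_⟩
            calc (Bk n).1 ≤ (Bk 0).1 := hBanti.antitone (Nat.zero_le n)
            _ = z0 := hB0
          exact (Set.infinite_of_injective_forall_mem hinj hmem) (hfin z z0)
        obtain ⟨n, hn⟩ := hex
        refine ⟨(-n : ℤ), ?_⟩
        by_cases h0 : n = 0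
        · subst h0
          have h5 : x (((0:ℕ)) : ℤ) = (F 0).1 := hxnat 0
          rw [show (-(((0:ℕ)) : ℤ)) = (((0:ℕ)) : ℤ) by norm_num, h5, hF0, ← hB0, hn]
        · have hneg : ¬ (0 ≤ (-n : ℤ)) := by omega
          have h2 : (-(-(n : ℤ))).toNat = n := by omega
          rw [hx]
          simp only [hneg, if_neg, not_false_iff]
          rw [h2]
          exact hn
  refine ⟨x, hmonoZ, hrange, ?_, ?_⟩
  · rintro g ⟨k, hk⟩
    obtain ⟨g', hg'G, -, he, -⟩ := key k
    have : g = g' := by rw [hk, he]; ring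
    rw [this]; exact hg'G
  · rintro g hg0 ⟨z, hz, hzg, hmin⟩
    have h1 : z ∈ Set.range x := by rw [hrange]; exact hz
    have h2 : z + g ∈ Set.range x := by rw [hrange]; exact hzg
    obtain ⟨k, hk⟩ := h1
    obtain ⟨m, hm⟩ := h2
    have hkm : k < m := by
      have : x k < x m := by rw [hk, hm]; linarith
      exact hmonoZ.lt_iff_lt.mp this
    have h3 : x (k + 1) ≤ x m := hmonoZ.monotone (by omega)
    have h4 : z + g ≤ x (k + 1) := by
      apply hmin
      · exact hxmem (k + 1)
      · rw [← hk]; exact hmonoZ (by omega)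
    refine ⟨k, ?_⟩
    rw [hm] at h3
    linarith [h3, h4, hk]

section Exact

variable {β q : ℝ} {p j : ℤ} {c d : ℝ} {Ω : Set ℝ}

lemma exact1 (h1 : 1 < β) (hq : q = (p : ℝ) - β)
    (hP : (1 ≤ p ∧ β * q = -1) ∨ (3 ≤ p ∧ β * q = 1))
    (hj1 : 1 ≤ j) (hjβ : (j : ℝ) < β) (hcd : c < d)
    (hΩ : Ω = Set.Icc c d ∨ Ω = Set.Ico c d ∨ Ω = Set.Ioc c d ∨ Ω = Set.Ioo c d)
    (hl1 : 1 < d - c) (hl2 : d - c ≤ β) (hlj : β - (j : ℝ) < d - c)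
    (hcase : d - c < β + 1 - (j : ℝ) ∨
      (d - c = β + 1 - (j : ℝ) ∧ (Ω = Set.Ico c d ∨ Ω = Set.Ioc c d))) :
    ∃ z ∈ sigmaCP β q Ω, z + 1 ∈ sigmaCP β q Ω ∧
      ∀ y ∈ sigmaCP β q Ω, z < y → z + 1 ≤ y := by
  obtain ⟨a, b, ht1, ht2⟩ := lattice_dense h1 hq hP
    (lt_min (by linarith : c < d - 1) (by linarith : c < c + β - 1))
  set t : ℝ := (a : ℝ) + b * q with htdef
  have htd1 : t < d - 1 := lt_of_lt_of_le ht2 (min_le_left _ _)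
  have htb1 : t < c + β - 1 := lt_of_lt_of_le ht2 (min_le_right _ _)
  have htΩ : t ∈ Ω := mem_of_Ioo hΩ ht1 (by linarith)
  have ht1Ω : t + 1 ∈ Ω := mem_of_Ioo hΩ (by linarith) (by linarith)
  refine ⟨(a : ℝ) + b * β, ⟨a, b, rfl, htΩ⟩, ⟨a + 1, b, by push_cast; ring, ?_⟩, ?_⟩
  · have he : ((a + 1 : ℤ) : ℝ) + (b : ℝ) * q = t + 1 := by push_cast; ring
    rw [he]; exact ht1Ω
  · refine noMid h1 hq hP hj1 hjβ hcd hΩ hl1 hl2 hlj hcase rfl htdef htΩ (Or.inl ⟨rfl, ?_⟩)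
    by_cases ho : 1 < (j : ℝ) - q
    · exact Or.inl ho
    · right
      have qc := qcases h1 hq hP
      have hqu : q < 1 := by rcases qc with ⟨-, -, h⟩ | ⟨-, -, h, -⟩ <;> linarith
      have hje : j = 1 := by
        have h5 : (j : ℝ) < 2 := by push_neg at ho; linarith
        have h6 : j < 2 := by exact_mod_cast h5
        omega
      intro hmem
      have := (bnd_of_mem hΩ hmem).1
      rw [hje] at this
      push_cast at this
      linarith

lemma exact2 (h1 : 1 < β) (hq : q = (p : ℝ) - β)
    (hP : (1 ≤ p ∧ β * q = -1) ∨ (3 ≤ p ∧ β * q = 1))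
    (hj1 : 1 ≤ j) (hjβ : (j : ℝ) < β) (hcd : c < d)
    (hΩ : Ω = Set.Icc c d ∨ Ω = Set.Ico c d ∨ Ω = Set.Ioc c d ∨ Ω = Set.Ioo c d)
    (hl1 : 1 < d - c) (hl2 : d - c ≤ β) (hlj : β - (j : ℝ) < d - c)
    (hcase : d - c < β + 1 - (j : ℝ) ∨
      (d - c = β + 1 - (j : ℝ) ∧ (Ω = Set.Ico c d ∨ Ω = Set.Ioc c d))) :
    ∃ z ∈ sigmaCP β q Ω, z + ((j : ℝ) - q) ∈ sigmaCP β q Ω ∧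
      ∀ y ∈ sigmaCP β q Ω, z < y → z + ((j : ℝ) - q) ≤ y := by
  obtain ⟨a, b, ht1, ht2⟩ := lattice_dense h1 hq hP
    (max_lt (by linarith : d - 1 < d) (by linarith : c + β - (j : ℝ) < d))
  set t : ℝ := (a : ℝ) + b * q with htdef
  have htd1 : d - 1 < t := lt_of_le_of_lt (le_max_left _ _) ht1
  have htb1 : c + β - (j : ℝ) < t := lt_of_le_of_lt (le_max_right _ _) ht1
  have htΩ : t ∈ Ω := mem_of_Ioo hΩ (by linarith) ht2
  have ht2Ω : t + ((j : ℝ) - β) ∈ Ω := mem_of_Ioo hΩ (by linarith) (by linarith)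
  have ht1no : t + 1 ∉ Ω := by
    intro hmem
    have := (bnd_of_mem hΩ hmem).2
    linarith
  refine ⟨(a : ℝ) + b * β, ⟨a, b, rfl, htΩ⟩, ⟨a + j - p, b + 1, ?_, ?_⟩, ?_⟩
  · push_cast; rw [hq]; ring
  · have he : ((a + j - p : ℤ) : ℝ) + ((b + 1 : ℤ) : ℝ) * q = t + ((j : ℝ) - β) := by
      rw [htdef]; push_cast; linear_combination hq
    rw [he]; exact ht2Ω
  · exact noMid h1 hq hP hj1 hjβ hcd hΩ hl1 hl2 hlj hcase rfl htdef htΩ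
      (Or.inr (Or.inl ⟨rfl, Or.inr ht1no⟩))

lemma exact3 (h1 : 1 < β) (hq : q = (p : ℝ) - β)
    (hP : (1 ≤ p ∧ β * q = -1) ∨ (3 ≤ p ∧ β * q = 1))
    (hj1 : 1 ≤ j) (hjβ : (j : ℝ) < β) (hcd : c < d)
    (hΩ : Ω = Set.Icc c d ∨ Ω = Set.Ico c d ∨ Ω = Set.Ioc c d ∨ Ω = Set.Ioo c d)
    (hl1 : 1 < d - c) (hl2 : d - c ≤ β) (hlj : β - (j : ℝ) < d - c)
    (hpart : d - c < β + 1 - (j : ℝ)) :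
    ∃ z ∈ sigmaCP β q Ω, z + ((j : ℝ) + 1 - q) ∈ sigmaCP β q Ω ∧
      ∀ y ∈ sigmaCP β q Ω, z < y → z + ((j : ℝ) + 1 - q) ≤ y := by
  obtain ⟨a, b, ht1, ht2⟩ := lattice_dense h1 hq hP
    (by linarith : d - 1 < c + β - (j : ℝ))
  set t : ℝ := (a : ℝ) + b * q with htdef
  have htΩ : t ∈ Ω := mem_of_Ioo hΩ (by linarith) (by linarith)
  have ht3Ω : t + ((j : ℝ) + 1 - β) ∈ Ω := mem_of_Ioo hΩ (by linarith) (by linarith)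
  have ht1no : t + 1 ∉ Ω := by
    intro hmem
    have := (bnd_of_mem hΩ hmem).2
    linarith
  have ht2no : t + ((j : ℝ) - β) ∉ Ω := by
    intro hmem
    have := (bnd_of_mem hΩ hmem).1
    linarith
  refine ⟨(a : ℝ) + b * β, ⟨a, b, rfl, htΩ⟩, ⟨a + j + 1 - p, b + 1, ?_, ?_⟩, ?_⟩
  · push_cast; rw [hq]; ring
  · have he : ((a + j + 1 - p : ℤ) : ℝ) + ((b + 1 : ℤ) : ℝ) * q = t + ((j : ℝ) + 1 - β) := by
      rw [htdef]; push_cast; linear_combination hq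
    rw [he]; exact ht3Ω
  · exact noMid h1 hq hP hj1 hjβ hcd hΩ hl1 hl2 hlj (Or.inl hpart) rfl htdef htΩ
      (Or.inr (Or.inr ⟨rfl, ht1no, ht2no, hpart⟩))

end Exact

section Assemble

variable {β q : ℝ} {p j : ℤ} {c d : ℝ} {Ω : Set ℝ}

lemma sigma_neg (β q : ℝ) (Ω : Set ℝ) (x : ℝ) :
    x ∈ sigmaCP β q {u : ℝ | -u ∈ Ω} ↔ -x ∈ sigmaCP β q Ω := by
  constructor
  · rintro ⟨a, b, hx, hs⟩
    refine ⟨-a, -b, by rw [hx]; push_cast; ring, ?_⟩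
    have he : ((-a : ℤ) : ℝ) + ((-b : ℤ) : ℝ) * q = -((a : ℝ) + b * q) := by push_cast; ring
    rw [he]
    exact hs
  · rintro ⟨a, b, hx, hs⟩
    refine ⟨-a, -b, by push_cast; linarith [hx], ?_⟩
    show -( ((-a : ℤ) : ℝ) + ((-b : ℤ) : ℝ) * q) ∈ Ω
    have he : -(((-a : ℤ) : ℝ) + ((-b : ℤ) : ℝ) * q) = (a : ℝ) + b * q := by push_cast; ring
    rw [he]
    exact hs

lemma negΩ_forms (hΩ : Ω = Set.Icc c d ∨ Ω = Set.Ico c d ∨ Ω = Set.Ioc c d ∨ Ω = Set.Ioo c d) :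
    {u : ℝ | -u ∈ Ω} = Set.Icc (-d) (-c) ∨ {u : ℝ | -u ∈ Ω} = Set.Ico (-d) (-c) ∨
      {u : ℝ | -u ∈ Ω} = Set.Ioc (-d) (-c) ∨ {u : ℝ | -u ∈ Ω} = Set.Ioo (-d) (-c) := by
  rcases hΩ with h | h | h | h <;> subst h
  · left
    ext u; simp only [Set.mem_setOf_eq, Set.mem_Icc]
    constructor <;> rintro ⟨h1, h2⟩ <;> constructor <;> linarith
  · right; right; left
    ext u; simp only [Set.mem_setOf_eq, Set.mem_Ico, Set.mem_Ioc]
    constructor <;> rintro ⟨h1, h2⟩ <;> constructor <;> linarith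
  · right; left
    ext u; simp only [Set.mem_setOf_eq, Set.mem_Ioc, Set.mem_Ico]
    constructor <;> rintro ⟨h1, h2⟩ <;> constructor <;> linarith
  · right; right; right
    ext u; simp only [Set.mem_setOf_eq, Set.mem_Ioo]
    constructor <;> rintro ⟨h1, h2⟩ <;> constructor <;> linarith

lemma negΩ_Ico (h : Ω = Set.Ico c d) : {u : ℝ | -u ∈ Ω} = Set.Ioc (-d) (-c) := by
  subst h
  ext u; simp only [Set.mem_setOf_eq, Set.mem_Ico, Set.mem_Ioc]
  constructor <;> rintro ⟨h1, h2⟩ <;> constructor <;> linarith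

lemma negΩ_Ioc (h : Ω = Set.Ioc c d) : {u : ℝ | -u ∈ Ω} = Set.Ico (-d) (-c) := by
  subst h
  ext u; simp only [Set.mem_setOf_eq, Set.mem_Ioc, Set.mem_Ico]
  constructor <;> rintro ⟨h1, h2⟩ <;> constructor <;> linarith

lemma mainLemma (h1 : 1 < β) (hq : q = (p : ℝ) - β)
    (hP : (1 ≤ p ∧ β * q = -1) ∨ (3 ≤ p ∧ β * q = 1))
    (hj1 : 1 ≤ j) (hjβ : (j : ℝ) < β) (hcd : c < d)
    (hΩ : Ω = Set.Icc c d ∨ Ω = Set.Ico c d ∨ Ω = Set.Ioc c d ∨ Ω = Set.Ioo c d)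
    (hl1 : 1 < d - c) (hl2 : d - c ≤ β) (hlj : β - (j : ℝ) < d - c)
    (hcase : d - c < β + 1 - (j : ℝ) ∨
      (d - c = β + 1 - (j : ℝ) ∧ (Ω = Set.Ico c d ∨ Ω = Set.Ioc c d))) :
    ∃ x : ℤ → ℝ, StrictMono x ∧ Set.range x = sigmaCP β q Ω ∧
      ((d - c < β + 1 - (j : ℝ) ∧
        {g : ℝ | ∃ k : ℤ, g = x (k + 1) - x k} =
          ({1, (j : ℝ) - q, (j : ℝ) + 1 - q} : Set ℝ)) ∨
       (d - c = β + 1 - (j : ℝ) ∧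
        {g : ℝ | ∃ k : ℤ, g = x (k + 1) - x k} = ({1, (j : ℝ) - q} : Set ℝ))) := by
  have qc := qcases h1 hq hP
  have hqu : q < 1 := by rcases qc with ⟨-, -, h⟩ | ⟨-, -, h, -⟩ <;> linarith
  have hj1R : (1 : ℝ) ≤ (j : ℝ) := by exact_mod_cast hj1
  -- the reflected data
  set Ω' : Set ℝ := {u : ℝ | -u ∈ Ω} with hΩ'def
  have hΩ' := negΩ_forms hΩ
  have hcd' : -d < -c := by linarith
  have hl1' : 1 < (-c) - (-d) := by linarith
  have hl2' : (-c) - (-d) ≤ β := by linarith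
  have hlj' : β - (j : ℝ) < (-c) - (-d) := by linarith
  have hcase' : (-c) - (-d) < β + 1 - (j : ℝ) ∨
      ((-c) - (-d) = β + 1 - (j : ℝ) ∧ (Ω' = Set.Ico (-d) (-c) ∨ Ω' = Set.Ioc (-d) (-c))) := by
    rcases hcase with h | ⟨he, hsemi⟩
    · left; linarith
    · right
      refine ⟨by linarith, ?_⟩
      rcases hsemi with h | h
      · right; exact negΩ_Ico h
      · left; exact negΩ_Ioc h
  have hsucc' := succEx h1 hq hP hj1 hjβ hcd' hΩ' hl1' hl2' hlj' hcase'
  have hsucc := succEx h1 hq hP hj1 hjβ hcd hΩ hl1 hl2 hlj hcase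
  have hpred : ∀ x ∈ sigmaCP β q Ω, ∃ g : ℝ,
      (g = 1 ∨ g = (j : ℝ) - q ∨ (d - c < β + 1 - (j : ℝ) ∧ g = (j : ℝ) + 1 - q)) ∧
      0 < g ∧ x - g ∈ sigmaCP β q Ω ∧ ∀ y ∈ sigmaCP β q Ω, y < x → y ≤ x - g := by
    intro x hx
    have hx' : -x ∈ sigmaCP β q Ω' := by
      rw [sigma_neg, neg_neg]
      exact hx
    obtain ⟨g, hgf, hg0, hmem, hmin⟩ := hsucc' (-x) hx'
    refine ⟨g, ?_, hg0, ?_, ?_⟩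
    · rcases hgf with h | h | ⟨hh, h⟩
      · exact Or.inl h
      · exact Or.inr (Or.inl h)
      · exact Or.inr (Or.inr ⟨by linarith, h⟩)
    · have := (sigma_neg β q Ω (-x + g)).mp hmem
      have he : -(-x + g) = x - g := by ring
      rw [he] at this
      exact this
    · intro y hy hlt
      have hy' : -y ∈ sigmaCP β q Ω' := by rw [sigma_neg, neg_neg]; exact hy
      have := hmin (-y) hy' (by linarith)
      linarith
  have hfin : ∀ u v : ℝ, (sigmaCP β q Ω ∩ Set.Icc u v).Finite :=
    fun u v => sigma_finite h1 hqu (fun t ht => bnd_of_mem hΩ ht) u v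
  have hz0 : ((⌊c⌋ + 1 : ℤ) : ℝ) ∈ sigmaCP β q Ω := by
    refine ⟨⌊c⌋ + 1, 0, by push_cast; ring, ?_⟩
    have he : ((⌊c⌋ + 1 : ℤ) : ℝ) + (0 : ℤ) * q = ((⌊c⌋ + 1 : ℤ) : ℝ) := by push_cast; ring
    rw [he]
    refine mem_of_Ioo hΩ ?_ ?_
    · push_cast; linarith [Int.lt_floor_add_one c]
    · push_cast; linarith [Int.floor_le c]
  rcases hcase with hpart | ⟨heq, hsemi⟩
  · -- three gaps
    set G : Set ℝ := {1, (j : ℝ) - q, (j : ℝ) + 1 - q} with hG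
    have hsuccG : ∀ x ∈ sigmaCP β q Ω, ∃ g, g ∈ G ∧ 0 < g ∧ x + g ∈ sigmaCP β q Ω ∧
        ∀ y ∈ sigmaCP β q Ω, x < y → x + g ≤ y := by
      intro x hx
      obtain ⟨g, hgf, hg0, hmem, hmin⟩ := hsucc x hx
      refine ⟨g, ?_, hg0, hmem, hmin⟩
      rcases hgf with h | h | ⟨-, h⟩ <;> simp [hG, h]
    have hpredG : ∀ x ∈ sigmaCP β q Ω, ∃ g, g ∈ G ∧ 0 < g ∧ x - g ∈ sigmaCP β q Ω ∧
        ∀ y ∈ sigmaCP β q Ω, y < x → y ≤ x - g := by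
      intro x hx
      obtain ⟨g, hgf, hg0, hmem, hmin⟩ := hpred x hx
      refine ⟨g, ?_, hg0, hmem, hmin⟩
      rcases hgf with h | h | ⟨-, h⟩ <;> simp [hG, h]
    obtain ⟨x, hmono, hrange, hsub, hreal⟩ :=
      enumerate (sigmaCP β q Ω) G hfin _ hz0 hsuccG hpredG
    refine ⟨x, hmono, hrange, Or.inl ⟨hpart, ?_⟩⟩
    apply Set.Subset.antisymm hsub
    intro g hg
    rcases hg with h | h | h
    · subst h
      exact hreal 1 one_pos (exact1 h1 hq hP hj1 hjβ hcd hΩ hl1 hl2 hlj (Or.inl hpart))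
    · subst h
      exact hreal _ (by linarith) (exact2 h1 hq hP hj1 hjβ hcd hΩ hl1 hl2 hlj (Or.inl hpart))
    · rw [Set.mem_singleton_iff] at h
      subst h
      exact hreal _ (by linarith) (exact3 h1 hq hP hj1 hjβ hcd hΩ hl1 hl2 hlj hpart)
  · -- two gaps
    set G : Set ℝ := {1, (j : ℝ) - q} with hG
    have hsuccG : ∀ x ∈ sigmaCP β q Ω, ∃ g, g ∈ G ∧ 0 < g ∧ x + g ∈ sigmaCP β q Ω ∧
        ∀ y ∈ sigmaCP β q Ω, x < y → x + g ≤ y := by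
      intro x hx
      obtain ⟨g, hgf, hg0, hmem, hmin⟩ := hsucc x hx
      refine ⟨g, ?_, hg0, hmem, hmin⟩
      rcases hgf with h | h | ⟨hh, -⟩
      · simp [hG, h]
      · simp [hG, h]
      · exfalso; linarith
    have hpredG : ∀ x ∈ sigmaCP β q Ω, ∃ g, g ∈ G ∧ 0 < g ∧ x - g ∈ sigmaCP β q Ω ∧
        ∀ y ∈ sigmaCP β q Ω, y < x → y ≤ x - g := by
      intro x hx
      obtain ⟨g, hgf, hg0, hmem, hmin⟩ := hpred x hx
      refine ⟨g, ?_, hg0, hmem, hmin⟩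
      rcases hgf with h | h | ⟨hh, -⟩
      · simp [hG, h]
      · simp [hG, h]
      · exfalso; linarith
    obtain ⟨x, hmono, hrange, hsub, hreal⟩ :=
      enumerate (sigmaCP β q Ω) G hfin _ hz0 hsuccG hpredG
    refine ⟨x, hmono, hrange, Or.inr ⟨heq, ?_⟩⟩
    apply Set.Subset.antisymm hsub
    intro g hg
    rcases hg with h | h
    · subst h
      exact hreal 1 one_pos (exact1 h1 hq hP hj1 hjβ hcd hΩ hl1 hl2 hlj
        (Or.inr ⟨heq, hsemi⟩))
    · rw [Set.mem_singleton_iff] at h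
      subst h
      exact hreal _ (by linarith) (exact2 h1 hq hP hj1 hjβ hcd hΩ hl1 hl2 hlj
        (Or.inr ⟨heq, hsemi⟩))

end Assemble

/-- Proposition: gaps of `Σ_β(Ω)` for a quadratic Pisot unit `β` and an interval `Ω`
with `|Ω| ∈ (1, β]`: three values `1, j - β′, j + 1 - β′` if
`|Ω| ∈ (φ_j(β), φ_{j-1}(β))`, and exactly the two values `1, j - β′` if
`|Ω| = φ_{j-1}(β)` and `Ω` is semi-closed. -/
theorem cutProject_gap_values (β β' : ℝ) (p : ℤ)
    (hβ : 1 < β)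
    (hp : (1 ≤ p ∧ β ^ 2 = p * β + 1) ∨ (3 ≤ p ∧ β ^ 2 = p * β - 1))
    (hβ' : β' = (p : ℝ) - β)
    (Ω : Set ℝ) (c d : ℝ) (hcd : c < d)
    (hΩ : Ω = Set.Icc c d ∨ Ω = Set.Ico c d ∨ Ω = Set.Ioc c d ∨ Ω = Set.Ioo c d)
    (hlen : 1 < d - c ∧ d - c ≤ β) :
    (∀ j : ℤ, 1 ≤ j → j ≤ ⌊β⌋ →
      phiGap β j < d - c → d - c < phiGap β (j - 1) →
      ∃ x : ℤ → ℝ, StrictMono x ∧ Set.range x = sigmaCP β β' Ω ∧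
        {g : ℝ | ∃ k : ℤ, g = x (k + 1) - x k} =
          ({1, (j : ℝ) - β', (j : ℝ) + 1 - β'} : Set ℝ)) ∧
    (∀ j : ℤ, 1 ≤ j → j ≤ ⌊β⌋ →
      d - c = phiGap β (j - 1) →
      (Ω = Set.Ico c d ∨ Ω = Set.Ioc c d) →
      ∃ x : ℤ → ℝ, StrictMono x ∧ Set.range x = sigmaCP β β' Ω ∧
        {g : ℝ | ∃ k : ℤ, g = x (k + 1) - x k} = ({1, (j : ℝ) - β'} : Set ℝ)) := by
  have hq : β' = (p : ℝ) - β := hβ'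
  have hP : (1 ≤ p ∧ β * β' = -1) ∨ (3 ≤ p ∧ β * β' = 1) := by
    rcases hp with ⟨h1p, he⟩ | ⟨h3p, he⟩
    · exact Or.inl ⟨h1p, by rw [hβ']; linear_combination -he⟩
    · exact Or.inr ⟨h3p, by rw [hβ']; linear_combination -he⟩
  have qc := qcases hβ hq hP
  have hq0 : β' ≠ 0 := by
    rcases qc with ⟨-, -, h⟩ | ⟨-, h, -, -⟩ <;> intro h0 <;> rw [h0] at h <;> linarith
  have hql : (-1 : ℝ) < β' := by rcases qc with ⟨-, h, -⟩ | ⟨-, h, -, -⟩ <;> linarith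
  have hqu : β' < 1 := by rcases qc with ⟨-, -, h⟩ | ⟨-, -, h, -⟩ <;> linarith
  have hfl : (⌊β⌋ : ℝ) < β := by
    rcases lt_or_eq_of_le (Int.floor_le β) with h | h
    · exact h
    · exfalso
      have h2 : β' = ((p - ⌊β⌋ : ℤ) : ℝ) := by rw [hβ']; push_cast; linarith [h]
      have h3 : (-1 : ℝ) < ((p - ⌊β⌋ : ℤ) : ℝ) := by rw [← h2]; exact hql
      have h4 : ((p - ⌊β⌋ : ℤ) : ℝ) < 1 := by rw [← h2]; exact hqu
      have h5 : p - ⌊β⌋ = 0 := by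
        have h6 : (-1 : ℤ) < p - ⌊β⌋ := by exact_mod_cast h3
        have h7 : (p - ⌊β⌋ : ℤ) < 1 := by exact_mod_cast h4
        omega
      rw [h5] at h2
      push_cast at h2
      exact hq0 h2
  constructor
  · intro j hj1 hj2 h3 h4
    have hjβ : (j : ℝ) < β := by
      have h5 : (j : ℝ) ≤ (⌊β⌋ : ℝ) := by exact_mod_cast hj2
      linarith
    have hphi1 : phiGap β (j - 1) = β + 1 - (j : ℝ) := by
      have hne : ¬ (j - 1 = ⌊β⌋) := by omega
      rw [phiGap, if_neg hne]; push_cast; ring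
    rw [hphi1] at h4
    have hlj : β - (j : ℝ) < d - c := by
      by_cases hjfl : j = ⌊β⌋
      · have h6 : β < (⌊β⌋ : ℝ) + 1 := Int.lt_floor_add_one β
        have h5 : phiGap β j = 1 := by rw [phiGap, if_pos hjfl]
        rw [h5] at h3
        have h7 : (j : ℝ) = (⌊β⌋ : ℝ) := by exact_mod_cast hjfl
        linarith
      · have h5 : phiGap β j = β - (j : ℝ) := by rw [phiGap, if_neg hjfl]
        rw [h5] at h3
        exact h3
    obtain ⟨x, hmono, hrange, hD⟩ :=
      mainLemma hβ hq hP hj1 hjβ hcd hΩ hlen.1 hlen.2 hlj (Or.inl h4)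
    rcases hD with ⟨-, hDeq⟩ | ⟨habs, -⟩
    · exact ⟨x, hmono, hrange, hDeq⟩
    · exfalso; linarith
  · intro j hj1 hj2 heq hsemi
    have hjβ : (j : ℝ) < β := by
      have h5 : (j : ℝ) ≤ (⌊β⌋ : ℝ) := by exact_mod_cast hj2
      linarith
    have hphi1 : phiGap β (j - 1) = β + 1 - (j : ℝ) := by
      have hne : ¬ (j - 1 = ⌊β⌋) := by omega
      rw [phiGap, if_neg hne]; push_cast; ring
    rw [hphi1] at heq
    have hlj : β - (j : ℝ) < d - c := by linarith [hlen.1]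
    obtain ⟨x, hmono, hrange, hD⟩ :=
      mainLemma hβ hq hP hj1 hjβ hcd hΩ hlen.1 hlen.2 hlj (Or.inr ⟨heq, hsemi⟩)
    rcases hD with ⟨habs, -⟩ | ⟨-, hDeq⟩
    · exfalso; linarith
    · exact ⟨x, hmono, hrange, hDeq⟩
end
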